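/- arXiv:0809.3413 — 11 statements merged into one kernel-verified Lean document; each statement's English description precedes it below -/
import Mathlib

section
/- Let p be a prime and let α = (α₁, …, α_r) be a basis for a finite abelian p-group G, with ord(α_i) = p^{n_i}. Let j and k be nonnegative integers with j < k, and set q_i = p^{j + max(0, n_i − k)} and α(j,k) = (α₁^{q₁}, …, α_r^{q_r}). Then α(j,k) is a basis for the subgroup G(j,k) = {β^{p^j} : β ∈ G, β^{p^k} = 1}; that is, ⟨α(j,k)⟩ = G(j,k) and every element of G(j,k) has a unique representation ∏_{i=1}^r (α_i^{q_i})^{x_i} with integers 0 ≤ x_i < ord(α_i^{q_i}). -/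
/-- A tuple `α` of elements of a finite abelian group is a *basis* for a subgroup `H`
if it generates `H` and every element of `H` has a unique representation
`∏ i, α i ^ x i` with `0 ≤ x i < orderOf (α i)`. -/
def IsBasis {G : Type*} [CommGroup G] {ι : Type*} [Fintype ι]
    (α : ι → G) (H : Subgroup G) : Prop :=
  Subgroup.closure (Set.range α) = H ∧
    ∀ β ∈ H, ∃! x : ι → ℕ,
      (∀ i, x i < orderOf (α i)) ∧ ∏ i, α i ^ x i = β

/-- order of a prime-power power of an element of prime-power order. -/
lemma orderOf_pow_pow_prime' {G : Type*} [Group G] {p : ℕ} (hp : p.Prime) (a : G) {m e : ℕ}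
    (ha : orderOf a = p ^ m) : orderOf (a ^ p ^ e) = p ^ (m - e) := by
  rw [orderOf_pow' a (pow_ne_zero e hp.pos.ne'), ha]
  rcases le_total m e with h | h
  · rw [Nat.gcd_eq_left (pow_dvd_pow p h), Nat.div_self (pow_pos hp.pos m),
      Nat.sub_eq_zero_of_le h, pow_zero]
  · rw [Nat.gcd_eq_right (pow_dvd_pow p h), Nat.pow_div h hp.pos]

lemma cancel_aux' {p : ℕ} (hp : p.Prime) {e nn x x' : ℕ}
    (hx : x < p ^ (nn - e)) (hx' : x' < p ^ (nn - e))
    (h : p ^ e * x % p ^ nn = p ^ e * x' % p ^ nn) : x = x' := by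
  rcases le_total e nn with he | he
  · have hnn : p ^ nn = p ^ e * p ^ (nn - e) := by
      rw [← pow_add, Nat.add_sub_cancel' he]
    rw [hnn, Nat.mul_mod_mul_left, Nat.mul_mod_mul_left] at h
    have := Nat.eq_of_mul_eq_mul_left (pow_pos hp.pos e) h
    rwa [Nat.mod_eq_of_lt hx, Nat.mod_eq_of_lt hx'] at this
  · have h1 : p ^ (nn - e) = 1 := by rw [Nat.sub_eq_zero_of_le he, pow_zero]
    omega

/-- Lemma 1 of the paper: with `q i = p ^ (j + max 0 (n i - k))`,
the tuple `α(j,k) = (α i ^ q i)` is a basis for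
`G(j,k) = {β ^ p ^ j : β ∈ G, β ^ p ^ k = 1}`. -/
theorem basis_of_subgroup_jk {p : ℕ} (hp : p.Prime) {G : Type*} [CommGroup G]
    [Fintype G] (hG : IsPGroup p G) {r : ℕ} (α : Fin r → G) (n : Fin r → ℕ)
    (hord : ∀ i, orderOf (α i) = p ^ n i)
    (hα : IsBasis α (⊤ : Subgroup G))
    (j k : ℕ) (hjk : j < k) :
    ((Subgroup.closure (Set.range fun i => α i ^ p ^ (j + (n i - k))) : Subgroup G) : Set G)
        = {g : G | ∃ β : G, β ^ p ^ k = 1 ∧ β ^ p ^ j = g} ∧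
      ∀ g ∈ {g : G | ∃ β : G, β ^ p ^ k = 1 ∧ β ^ p ^ j = g},
        ∃! x : Fin r → ℕ,
          (∀ i, x i < orderOf (α i ^ p ^ (j + (n i - k)))) ∧
            ∏ i, (α i ^ p ^ (j + (n i - k))) ^ x i = g := by
  -- abbreviations
  set S : Set G := {g : G | ∃ β : G, β ^ p ^ k = 1 ∧ β ^ p ^ j = g} with hS
  -- exponents agree modulo the orders
  have hmod : ∀ z w : Fin r → ℕ, ∏ i, α i ^ z i = ∏ i, α i ^ w i →
      ∀ i, z i % p ^ n i = w i % p ^ n i := by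
    intro z w hzw i
    obtain ⟨x, -, hux⟩ := hα.2 (∏ i, α i ^ z i) (Subgroup.mem_top _)
    have hz : (fun i => z i % p ^ n i) = x := by
      refine hux _ ⟨fun i => ?_, ?_⟩
      · rw [hord]; exact Nat.mod_lt _ (pow_pos hp.pos _)
      · exact Finset.prod_congr rfl fun i _ => by dsimp only; rw [← hord i, pow_mod_orderOf]
    have hw : (fun i => w i % p ^ n i) = x := by
      refine hux _ ⟨fun i => ?_, ?_⟩
      · rw [hord]; exact Nat.mod_lt _ (pow_pos hp.pos _)
      · rw [hzw]
        exact Finset.prod_congr rfl fun i _ => by dsimp only; rw [← hord i, pow_mod_orderOf]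
    exact congrFun (hz.trans hw.symm) i
  have hone : ∀ z : Fin r → ℕ, ∏ i, α i ^ z i = 1 → ∀ i, p ^ n i ∣ z i := by
    intro z hz i
    have h := hmod z (fun _ => 0) (by simpa using hz) i
    simp only [Nat.zero_mod] at h
    exact Nat.dvd_of_mod_eq_zero h
  -- every element of S is a product of the new generators
  have hrep : ∀ g ∈ S, ∃ t : Fin r → ℕ,
      ∏ i, (α i ^ p ^ (j + (n i - k))) ^ t i = g := by
    rintro g ⟨β, hβk, hβj⟩
    obtain ⟨y, ⟨-, hyprod⟩, -⟩ := hα.2 β (Subgroup.mem_top _)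
    have h1 : ∏ i, α i ^ (y i * p ^ k) = 1 := by
      rw [← hβk, ← hyprod, ← Finset.prod_pow]
      exact Finset.prod_congr rfl fun i _ => by rw [pow_mul]
    have hdvd : ∀ i, p ^ (n i - k) ∣ y i := by
      intro i
      have h2 := hone _ h1 i
      rcases le_total (n i) k with h | h
      · rw [Nat.sub_eq_zero_of_le h, pow_zero]; exact one_dvd _
      · have h3 : p ^ (n i - k) * p ^ k ∣ y i * p ^ k := by
          rwa [← pow_add, Nat.sub_add_cancel h]
        exact (mul_dvd_mul_iff_right (pow_ne_zero k hp.pos.ne')).mp h3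
    choose t ht using hdvd
    refine ⟨t, ?_⟩
    rw [← hβj, ← hyprod, ← Finset.prod_pow]
    refine Finset.prod_congr rfl fun i _ => ?_
    rw [← pow_mul, ← pow_mul, ht i, pow_add]
    congr 1
    ring
  -- set equality
  have hsub : ((Subgroup.closure (Set.range fun i => α i ^ p ^ (j + (n i - k))) :
      Subgroup G) : Set G) = S := by
    apply Set.Subset.antisymm
    · intro g hg
      induction hg using Subgroup.closure_induction with
      | mem x hx =>
        obtain ⟨i, rfl⟩ := hx
        refine ⟨α i ^ p ^ (n i - k), ?_, ?_⟩
        · rw [← pow_mul, ← pow_add]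
          exact orderOf_dvd_iff_pow_eq_one.mp (by rw [hord]; exact pow_dvd_pow p (by omega))
        · rw [← pow_mul, ← pow_add, add_comm]
      | one => exact ⟨1, one_pow _, one_pow _⟩
      | mul a b _ _ ha hb =>
        obtain ⟨β₁, h1, h2⟩ := ha
        obtain ⟨β₂, h3, h4⟩ := hb
        exact ⟨β₁ * β₂, by rw [mul_pow, h1, h3, one_mul], by rw [mul_pow, h2, h4]⟩
      | inv a _ ha =>
        obtain ⟨β, h1, h2⟩ := ha
        exact ⟨β⁻¹, by rw [inv_pow, h1, inv_one], by rw [inv_pow, h2]⟩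
    · intro g hg
      obtain ⟨t, ht⟩ := hrep g hg
      rw [← ht]
      exact Subgroup.prod_mem _ fun i _ =>
        Subgroup.pow_mem _ (Subgroup.subset_closure (Set.mem_range_self i)) _
  refine ⟨hsub, ?_⟩
  -- unique representation
  intro g hg
  obtain ⟨t, ht⟩ := hrep g hg
  refine ⟨fun i => t i % orderOf (α i ^ p ^ (j + (n i - k))), ⟨?_, ?_⟩, ?_⟩
  · exact fun i => Nat.mod_lt _ (orderOf_pos _)
  · rw [← ht]
    exact Finset.prod_congr rfl fun i _ => pow_mod_orderOf _ _
  · rintro x' ⟨hx'lt, hx'prod⟩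
    funext i
    have hordpow : ∀ i, orderOf (α i ^ p ^ (j + (n i - k))) = p ^ (n i - (j + (n i - k))) :=
      fun i => orderOf_pow_pow_prime' hp (α i) (hord i)
    have hprodeq : ∏ i, α i ^ (p ^ (j + (n i - k)) * x' i)
        = ∏ i, α i ^ (p ^ (j + (n i - k)) * (t i % orderOf (α i ^ p ^ (j + (n i - k))))) := by
      have e1 : ∏ i, α i ^ (p ^ (j + (n i - k)) * x' i)
          = ∏ i, (α i ^ p ^ (j + (n i - k))) ^ x' i :=
        Finset.prod_congr rfl fun i _ => by rw [← pow_mul]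
      have e2 : ∏ i, α i ^ (p ^ (j + (n i - k)) * (t i % orderOf (α i ^ p ^ (j + (n i - k)))))
          = ∏ i, (α i ^ p ^ (j + (n i - k))) ^ (t i % orderOf (α i ^ p ^ (j + (n i - k)))) :=
        Finset.prod_congr rfl fun i _ => by rw [← pow_mul]
      rw [e1, e2, hx'prod, ← ht]
      exact Finset.prod_congr rfl fun i _ => (pow_mod_orderOf _ _).symm
    have hmodi := hmod _ _ hprodeq i
    refine cancel_aux' hp ?_ ?_ hmodi
    · rw [← hordpow i]; exact hx'lt i
    · rw [← hordpow i]; exact Nat.mod_lt _ (orderOf_pos _)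
end

section
/- Let p be a prime, let α be a basis for a finite abelian p-group G, and let j, j', k', k be integers with 0 ≤ j ≤ j' < k' ≤ k. Let β ∈ G(j,k), and suppose x is an integer vector with α(k',k)^x = β^{p^{k'−j}}. Then the element γ := β^{p^{j'−j}} · α(j',k)^{−x} lies in G(j',k'). -/
/-- Lemma 2(i) of the paper: for `0 ≤ j ≤ j' < k' ≤ k`,
`β ∈ G(j,k)` and an integer vector `x` with `α(k',k)^x = β^{p^{k'-j}}`,
the element `γ = β^{p^{j'-j}} ⬝ α(j',k)^{-x}` lies in `G(j',k')`, where
`α(j,k) i = α i ^ p ^ (j + max 0 (n i - k))`. -/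
theorem mem_subgroup_jk {p : ℕ} (hp : p.Prime) {G : Type*} [CommGroup G]
    [Fintype G] (hG : IsPGroup p G) {r : ℕ} (α : Fin r → G) (n : Fin r → ℕ)
    (hord : ∀ i, orderOf (α i) = p ^ n i)
    (hα : IsBasis α (⊤ : Subgroup G))
    (j j' k' k : ℕ) (hjj' : j ≤ j') (hj'k' : j' < k') (hk'k : k' ≤ k)
    (β : G) (hβ : ∃ b : G, b ^ p ^ k = 1 ∧ b ^ p ^ j = β)
    (x : Fin r → ℤ)
    (hx : ∏ i, (α i ^ p ^ (k' + (n i - k))) ^ x i = β ^ p ^ (k' - j)) :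
    ∃ b : G, b ^ p ^ k' = 1 ∧
      b ^ p ^ j' = β ^ p ^ (j' - j) * (∏ i, (α i ^ p ^ (j' + (n i - k))) ^ x i)⁻¹ := by
  obtain ⟨b, hbk, hbj⟩ := hβ
  set d : G := ∏ i, (α i ^ p ^ (n i - k)) ^ x i with hd
  have hdpow : ∀ m : ℕ, d ^ p ^ m = ∏ i, (α i ^ p ^ (m + (n i - k))) ^ x i := by
    intro m
    rw [hd, ← Finset.prod_pow]
    refine Finset.prod_congr rfl fun i _ => ?_
    rw [← zpow_natCast ((α i ^ p ^ (n i - k)) ^ x i) (p ^ m), ← zpow_mul, mul_comm,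
      zpow_mul, zpow_natCast, ← pow_mul, ← pow_add, Nat.add_comm]
  refine ⟨b * d⁻¹, ?_, ?_⟩
  · have h1 : d ^ p ^ k' = b ^ p ^ k' := by
      rw [hdpow, hx, ← hbj, ← pow_mul, ← pow_add, Nat.add_sub_cancel' (hjj'.trans hj'k'.le)]
    rw [mul_pow, inv_pow, h1, mul_inv_cancel]
  · rw [mul_pow, inv_pow, hdpow, ← hbj, ← pow_mul, ← pow_add,
      Nat.add_sub_cancel' hjj']
end

section
/- Let p be a prime, let α be a basis for a finite abelian p-group G, and let j, j', k', k be integers with 0 ≤ j ≤ j' < k' ≤ k. Let β ∈ G(j,k), let x be an integer vector with α(k',k)^x = β^{p^{k'−j}}, and set γ = β^{p^{j'−j}} · α(j',k)^{−x}. Then each component of q(j',k) divides the corresponding component of q(j',k'), so s := q(j',k')/q(j',k) (componentwise quotient) is an integer vector; and if v is an integer vector with α(j',k')^v = γ, then α(j',k)^{s·v + x} = β^{p^{j'−j}}, where s·v denotes the componentwise product. -/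
/-- Lemma 2(ii) of the paper: with `q(j,k) i = p ^ (j + max 0 (n i - k))`
and `α(j,k) i = α i ^ q(j,k) i`, each component of `q(j',k)` divides the corresponding
component of `q(j',k')`, so `s = q(j',k')/q(j',k)` is an integer vector; and if
`α(k',k)^x = β^{p^{k'-j}}`, `γ = β^{p^{j'-j}} ⬝ α(j',k)^{-x}` and `α(j',k')^v = γ`,
then `α(j',k)^{s·v + x} = β^{p^{j'-j}}`. -/
theorem dl_recombination {p : ℕ} (hp : p.Prime) {G : Type*} [CommGroup G]
    [Fintype G] (hG : IsPGroup p G) {r : ℕ} (α : Fin r → G) (n : Fin r → ℕ)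
    (hord : ∀ i, orderOf (α i) = p ^ n i)
    (hα : IsBasis α (⊤ : Subgroup G))
    (j j' k' k : ℕ) (hjj' : j ≤ j') (hj'k' : j' < k') (hk'k : k' ≤ k)
    (β : G) (hβ : ∃ b : G, b ^ p ^ k = 1 ∧ b ^ p ^ j = β)
    (x : Fin r → ℤ)
    (hx : ∏ i, (α i ^ p ^ (k' + (n i - k))) ^ x i = β ^ p ^ (k' - j)) :
    (∀ i, p ^ (j' + (n i - k)) ∣ p ^ (j' + (n i - k'))) ∧
      ∀ v : Fin r → ℤ,
        ∏ i, (α i ^ p ^ (j' + (n i - k'))) ^ v i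
            = β ^ p ^ (j' - j) * (∏ i, (α i ^ p ^ (j' + (n i - k))) ^ x i)⁻¹ →
        ∏ i, (α i ^ p ^ (j' + (n i - k))) ^
            (((p ^ (j' + (n i - k')) / p ^ (j' + (n i - k)) : ℕ) : ℤ) * v i + x i)
          = β ^ p ^ (j' - j) := by
  have hdvd : ∀ i, p ^ (j' + (n i - k)) ∣ p ^ (j' + (n i - k')) := fun i =>
    pow_dvd_pow p (by omega)
  refine ⟨hdvd, fun v hv => ?_⟩
  have key : ∀ i, (α i ^ p ^ (j' + (n i - k))) ^
      ((((p ^ (j' + (n i - k')) / p ^ (j' + (n i - k)) : ℕ) : ℤ)) * v i)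
      = (α i ^ p ^ (j' + (n i - k'))) ^ v i := by
    intro i
    rw [zpow_mul, zpow_natCast, ← pow_mul, Nat.mul_div_cancel' (hdvd i)]
  calc ∏ i, (α i ^ p ^ (j' + (n i - k))) ^
        (((p ^ (j' + (n i - k')) / p ^ (j' + (n i - k)) : ℕ) : ℤ) * v i + x i)
      = (∏ i, (α i ^ p ^ (j' + (n i - k'))) ^ v i) *
        ∏ i, (α i ^ p ^ (j' + (n i - k))) ^ x i := by
        rw [← Finset.prod_mul_distrib]
        exact Finset.prod_congr rfl fun i _ => by rw [zpow_add, key i]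
    _ = β ^ p ^ (j' - j) := by rw [hv, inv_mul_cancel_right]
end

section
/- Let p be a prime and let α = (α₁, …, α_r) be a basis for a subgroup of a finite abelian p-group G, with ord(α_i) = p^{n_i} and m = max_i n_i. Let β ∈ G with ord(β) ≤ p^m. Let h be the least integer in {0, 1, …, m} for which there exists an integer vector x with β^{p^h} = (α₁^{x₁} ⋯ α_r^{x_r})^{p^h} (such h exists, since h = m works with x = 0), and let x be such a vector for this minimal h (taking x = 0 when h = m). Then γ := β · α^{−x} has order exactly p^h. -/
/-- Lemma 5(i) of the paper: if `h ≤ m` is the least integer for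
which there is an integer vector `x` with `β^{p^h} = (α^x)^{p^h}` (taking `x = 0`
when `h = m`), and `ord β ≤ p^m` where `p^m = max orderOf (α i)`, then
`γ = β ⬝ α^{-x}` has order exactly `p^h`. -/
theorem order_of_reduced_element {p : ℕ} (hp : p.Prime) {G : Type*} [CommGroup G]
    [Fintype G] (hG : IsPGroup p G) {r : ℕ} (α : Fin r → G)
    (hα : IsBasis α (Subgroup.closure (Set.range α)))
    (n : Fin r → ℕ) (hord : ∀ i, orderOf (α i) = p ^ n i)
    (m : ℕ) (hm : IsGreatest (Set.range n) m)
    (β : G) (hβ : orderOf β ≤ p ^ m)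
    (h : ℕ) (hhm : h ≤ m)
    (x : Fin r → ℤ)
    (hx : β ^ p ^ h = (∏ i, α i ^ x i) ^ p ^ h)
    (hmin : ∀ h' < h, ¬ ∃ y : Fin r → ℤ, β ^ p ^ h' = (∏ i, α i ^ y i) ^ p ^ h')
    (hx0 : h = m → x = 0) :
    orderOf (β * (∏ i, α i ^ x i)⁻¹) = p ^ h := by
  set a : G := ∏ i, α i ^ x i with ha
  have hγ : (β * a⁻¹) ^ p ^ h = 1 := by
    rw [mul_pow, inv_pow, hx, mul_inv_cancel]
  have hdvd : orderOf (β * a⁻¹) ∣ p ^ h := orderOf_dvd_of_pow_eq_one hγ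
  obtain ⟨k, hk, hke⟩ := (Nat.dvd_prime_pow hp).mp hdvd
  rcases lt_or_eq_of_le hk with hlt | heq
  · exfalso
    apply hmin k hlt
    refine ⟨x, ?_⟩
    have : (β * a⁻¹) ^ p ^ k = 1 := by
      rw [← hke]; exact pow_orderOf_eq_one _
    rw [mul_pow, inv_pow] at this
    exact (mul_inv_eq_one.mp this)
  · rw [hke, heq]
end

section
/- Let p be a prime and let α = (α₁, …, α_r) be a basis for a subgroup of a finite abelian p-group G, with ord(α_i) = p^{n_i}, m = max_i n_i, and m₀ = min_i n_i. Let β ∈ G with ord(β) ≤ p^m. Let h be the least integer in {0, 1, …, m} for which there exists an integer vector x with β^{p^h} = (α₁^{x₁} ⋯ α_r^{x_r})^{p^h}, let x be such a vector for this minimal h (taking x = 0 when h = m), and set γ = β · α^{−x}. If ord(γ) ≤ p^{m₀}, then the extended tuple (α₁, …, α_r, γ) is a basis for the subgroup ⟨α₁, …, α_r, γ⟩. -/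
section Aux
variable {G : Type*} [CommGroup G] [Fintype G] {r : ℕ} {α : Fin r → G}

lemma basis_int_dvd (hα : IsBasis α (Subgroup.closure (Set.range α)))
    (c : Fin r → ℤ) (hc : ∏ i, α i ^ c i = 1) (i : Fin r) :
    (orderOf (α i) : ℤ) ∣ c i := by
  have hpos : ∀ i, 0 < orderOf (α i) := fun i => orderOf_pos _
  set e : Fin r → ℕ := fun i => (c i % (orderOf (α i) : ℤ)).toNat with he
  have hmod : ∀ i, (e i : ℤ) = c i % (orderOf (α i) : ℤ) := fun i =>
    Int.toNat_of_nonneg (Int.emod_nonneg _ (by exact_mod_cast (hpos i).ne'))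
  have h1 : ∏ i, α i ^ e i = 1 := by
    rw [← hc]
    refine Finset.prod_congr rfl fun i _ => ?_
    rw [← zpow_natCast, hmod i, zpow_mod_orderOf]
  have hlt : ∀ i, e i < orderOf (α i) := fun i => by
    have h2 : c i % (orderOf (α i) : ℤ) < (orderOf (α i) : ℤ) :=
      Int.emod_lt_of_pos _ (by exact_mod_cast hpos i)
    rw [← hmod i] at h2; exact_mod_cast h2
  obtain ⟨w, -, huniq⟩ := hα.2 1 (one_mem _)
  have he0 : e = (fun _ => 0) := by
    have h3 := huniq e ⟨hlt, h1⟩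
    have h4 := huniq (fun _ => 0) ⟨fun i => hpos i, by simp⟩
    rw [h3, h4]
  have : (e i : ℤ) = 0 := by rw [he0]; simp
  rw [hmod i] at this
  exact Int.dvd_of_emod_eq_zero this

lemma snoc_basis (hα : IsBasis α (Subgroup.closure (Set.range α))) (γ : G)
    (hind : ∀ z : ℕ, z < orderOf γ → γ ^ z ∈ Subgroup.closure (Set.range α) → z = 0) :
    IsBasis (Fin.snoc α γ) (Subgroup.closure (Set.range (Fin.snoc α γ))) := by
  have hrange : Set.range (Fin.snoc α γ) = Set.range α ∪ {γ} := by
    ext g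
    constructor
    · rintro ⟨i, rfl⟩
      induction i using Fin.lastCases with
      | last => simp
      | cast i => simp
    · rintro (⟨i, rfl⟩ | rfl)
      · exact ⟨i.castSucc, by simp⟩
      · exact ⟨Fin.last r, by simp⟩
  have hprodmem : ∀ u : Fin r → ℕ, ∏ i, α i ^ u i ∈ Subgroup.closure (Set.range α) :=
    fun u => Subgroup.prod_mem _ fun i _ =>
      pow_mem (Subgroup.subset_closure (Set.mem_range_self i)) _
  -- key uniqueness claim
  have key : ∀ u v : Fin (r+1) → ℕ,
      (∀ i, u i < orderOf ((Fin.snoc α γ : Fin (r+1) → G) i)) →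
      (∀ i, v i < orderOf ((Fin.snoc α γ : Fin (r+1) → G) i)) →
      ∏ i, (Fin.snoc α γ : Fin (r+1) → G) i ^ u i = ∏ i, (Fin.snoc α γ : Fin (r+1) → G) i ^ v i →
      u (Fin.last r) ≤ v (Fin.last r) → u = v := by
    intro u v hu hv heq hle
    rw [Fin.prod_univ_castSucc, Fin.prod_univ_castSucc] at heq
    simp only [Fin.snoc_castSucc, Fin.snoc_last] at heq
    have hzmem : γ ^ (v (Fin.last r) - u (Fin.last r)) ∈ Subgroup.closure (Set.range α) := by
      have h5 : (∏ i : Fin r, α i ^ u i.castSucc) * γ ^ u (Fin.last r)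
          = ((∏ i : Fin r, α i ^ v i.castSucc) * γ ^ (v (Fin.last r) - u (Fin.last r)))
            * γ ^ u (Fin.last r) := by
        rw [heq, mul_assoc, ← pow_add]
        congr 2
        omega
      have h6 := mul_right_cancel h5
      have h7 : γ ^ (v (Fin.last r) - u (Fin.last r)) =
          (∏ i : Fin r, α i ^ v i.castSucc)⁻¹ * ∏ i : Fin r, α i ^ u i.castSucc := by
        rw [h6, inv_mul_cancel_left]
      rw [h7]
      exact mul_mem (inv_mem (hprodmem _)) (hprodmem _)
    have hzlt : v (Fin.last r) - u (Fin.last r) < orderOf γ := by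
      have := hv (Fin.last r); simp only [Fin.snoc_last] at this; omega
    have hz0 := hind _ hzlt hzmem
    have hlast : u (Fin.last r) = v (Fin.last r) := by omega
    have heq2 : ∏ i : Fin r, α i ^ u i.castSucc = ∏ i : Fin r, α i ^ v i.castSucc := by
      rw [hlast] at heq
      exact mul_right_cancel heq
    obtain ⟨w, -, huniq⟩ := hα.2 (∏ i : Fin r, α i ^ u i.castSucc) (hprodmem _)
    have hu' : (fun i => u i.castSucc) = w := huniq _ ⟨fun i => by
      have := hu i.castSucc; simpa using this, rfl⟩
    have hv' : (fun i => v i.castSucc) = w := huniq _ ⟨fun i => by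
      have := hv i.castSucc; simpa using this, heq2.symm⟩
    funext i
    induction i using Fin.lastCases with
    | last => exact hlast
    | cast i => exact (congrFun hu' i).trans (congrFun hv' i).symm
  refine ⟨rfl, fun b hb => ?_⟩
  rw [hrange, Subgroup.closure_union, Subgroup.mem_sup] at hb
  obtain ⟨a, ha, c, hc, rfl⟩ := hb
  rw [Subgroup.mem_closure_singleton] at hc
  obtain ⟨t, rfl⟩ := hc
  obtain ⟨y, ⟨hylt, hyeq⟩, -⟩ := hα.2 a ha
  have hγpos : 0 < orderOf γ := orderOf_pos γ
  set z : ℕ := (t % (orderOf γ : ℤ)).toNat with hz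
  have hmodz : (z : ℤ) = t % (orderOf γ : ℤ) :=
    Int.toNat_of_nonneg (Int.emod_nonneg _ (by exact_mod_cast hγpos.ne'))
  have hγz : γ ^ z = γ ^ t := by
    rw [← zpow_natCast, hmodz, zpow_mod_orderOf]
  have hzlt : z < orderOf γ := by
    have h2 : t % (orderOf γ : ℤ) < (orderOf γ : ℤ) :=
      Int.emod_lt_of_pos _ (by exact_mod_cast hγpos)
    rw [← hmodz] at h2; exact_mod_cast h2
  refine ⟨Fin.snoc y z, ⟨fun i => ?_, ?_⟩, fun w hw => ?_⟩
  · induction i using Fin.lastCases with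
    | last => simpa using hzlt
    | cast i => simpa using hylt i
  · rw [Fin.prod_univ_castSucc]
    simp only [Fin.snoc_castSucc, Fin.snoc_last]
    rw [hγz, hyeq]
  · have hslt : ∀ i, (Fin.snoc y z : Fin (r+1) → ℕ) i < orderOf ((Fin.snoc α γ : Fin (r+1) → G) i) := fun i => by
      induction i using Fin.lastCases with
      | last => simpa using hzlt
      | cast i => simpa using hylt i
    have hseq : ∏ i, (Fin.snoc α γ : Fin (r+1) → G) i ^ (Fin.snoc y z : Fin (r+1) → ℕ) i = a * γ ^ t := by
      rw [Fin.prod_univ_castSucc]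
      simp only [Fin.snoc_castSucc, Fin.snoc_last]
      rw [hγz, hyeq]
    rcases le_total (w (Fin.last r)) ((Fin.snoc y z : Fin (r+1) → ℕ) (Fin.last r)) with hle | hle
    · exact key w (Fin.snoc y z) hw.1 hslt (by rw [hw.2, hseq]) hle
    · exact (key (Fin.snoc y z) w hslt hw.1 (by rw [hw.2, hseq]) hle).symm
end Aux

/-- Lemma 5(ii) of the paper: with `h ≤ m` minimal such that
`β^{p^h} = (α^x)^{p^h}` for some integer vector `x` (taking `x = 0` when `h = m`),
`ord β ≤ p^m`, and `γ = β ⬝ α^{-x}` of order at most `p^{m₀} = min orderOf (α i)`,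
the extended tuple `(α₁, …, α_r, γ)` is a basis for the subgroup it generates. -/
theorem extended_tuple_isBasis {p : ℕ} (hp : p.Prime) {G : Type*} [CommGroup G]
    [Fintype G] (hG : IsPGroup p G) {r : ℕ} (α : Fin r → G)
    (hα : IsBasis α (Subgroup.closure (Set.range α)))
    (n : Fin r → ℕ) (hord : ∀ i, orderOf (α i) = p ^ n i)
    (m : ℕ) (hm : IsGreatest (Set.range n) m)
    (m₀ : ℕ) (hm₀ : IsLeast (Set.range n) m₀)
    (β : G) (hβ : orderOf β ≤ p ^ m)
    (h : ℕ) (hhm : h ≤ m)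
    (x : Fin r → ℤ)
    (hx : β ^ p ^ h = (∏ i, α i ^ x i) ^ p ^ h)
    (hmin : ∀ h' < h, ¬ ∃ y : Fin r → ℤ, β ^ p ^ h' = (∏ i, α i ^ y i) ^ p ^ h')
    (hx0 : h = m → x = 0)
    (hγ : orderOf (β * (∏ i, α i ^ x i)⁻¹) ≤ p ^ m₀) :
    IsBasis (Fin.snoc α (β * (∏ i, α i ^ x i)⁻¹))
      (Subgroup.closure (Set.range (Fin.snoc α (β * (∏ i, α i ^ x i)⁻¹)))) := by
  
  set γ : G := β * (∏ i, α i ^ x i)⁻¹ with hγdef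
  have hp1 : 1 < p := hp.one_lt
  -- the order of γ is a power of p
  obtain ⟨k0, hk0⟩ := hG γ
  obtain ⟨k, hkle, hk⟩ := (Nat.dvd_prime_pow hp).mp (orderOf_dvd_of_pow_eq_one hk0)
  -- γ ^ p ^ h = 1
  have hγh : γ ^ p ^ h = 1 := by
    rw [hγdef, mul_pow, inv_pow, hx, mul_inv_cancel]
  have hkh : k ≤ h := by
    have := (Nat.pow_dvd_pow_iff_le_right hp1).mp (hk ▸ orderOf_dvd_of_pow_eq_one hγh)
    exact this
  have hkm₀ : k ≤ m₀ := by
    have : p ^ k ≤ p ^ m₀ := hk ▸ hγ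
    exact (Nat.pow_le_pow_iff_right hp1).mp this
  refine snoc_basis hα γ ?_
  intro z hzlt hzmem
  by_contra hz0
  have hzpos : 0 < z := Nat.pos_of_ne_zero hz0
  -- j := p-adic valuation via gcd
  obtain ⟨j, hjk, hj⟩ := (Nat.dvd_prime_pow hp).mp (Nat.gcd_dvd_right z (p ^ k))
  have hjklt : j < k := by
    rcases Nat.lt_or_ge j k with h' | h'
    · exact h'
    · exfalso
      have hjk' : j = k := le_antisymm hjk h'
      have : p ^ k ∣ z := hjk' ▸ hj ▸ Nat.gcd_dvd_left z (p ^ k)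
      have := Nat.le_of_dvd hzpos this
      rw [hk] at hzlt
      omega
  -- γ ^ p ^ j ∈ closure α via Bezout
  have hgj : γ ^ (p ^ j) ∈ Subgroup.closure (Set.range α) := by
    have hbez := Nat.gcd_eq_gcd_ab z (p ^ k)
    rw [hj] at hbez
    have hzp : (γ ^ (p ^ j) : G) = (γ ^ z) ^ Nat.gcdA z (p ^ k) *
        (γ ^ (p ^ k)) ^ Nat.gcdB z (p ^ k) := by
      rw [← zpow_natCast γ (p ^ j), hbez]
      rw [← zpow_natCast γ z, ← zpow_natCast γ (p ^ k), ← zpow_mul, ← zpow_mul, ← zpow_add]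
    have hγk : γ ^ (p ^ k) = 1 := by rw [← hk]; exact pow_orderOf_eq_one γ
    rw [hzp, hγk, one_zpow, mul_one]
    exact zpow_mem hzmem _
  -- representation of γ ^ p ^ j in the basis
  obtain ⟨y, ⟨hylt, hyeq⟩, -⟩ := hα.2 (γ ^ (p ^ j)) hgj
  have hjm₀ : j ≤ m₀ := le_trans (le_of_lt hjklt) hkm₀
  -- (γ ^ p ^ j) ^ (p ^ (m₀ - j)) = 1
  have hgm : (γ ^ (p ^ j)) ^ (p ^ (m₀ - j)) = 1 := by
    rw [← pow_mul, ← pow_add]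
    have : j + (m₀ - j) = m₀ := by omega
    rw [this]
    have : orderOf γ ∣ p ^ m₀ := hk ▸ pow_dvd_pow p hkm₀
    exact orderOf_dvd_iff_pow_eq_one.mp this
  -- each y i is divisible by p ^ j
  have hdvd : ∀ i, p ^ j ∣ y i := by
    intro i
    have h1 : ∏ i, α i ^ (y i * p ^ (m₀ - j)) = 1 := by
      rw [← hgm, ← hyeq, ← Finset.prod_pow]
      exact Finset.prod_congr rfl fun i _ => by rw [← pow_mul]
    have h2 : ∏ i, α i ^ ((y i * p ^ (m₀ - j) : ℕ) : ℤ) = 1 := by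
      rw [← h1]
      exact Finset.prod_congr rfl fun i _ => by rw [zpow_natCast]
    have h3 := basis_int_dvd hα _ h2 i
    rw [hord i] at h3
    have h4 : p ^ n i ∣ y i * p ^ (m₀ - j) := by exact_mod_cast h3
    have h5 : m₀ ≤ n i := hm₀.2 ⟨i, rfl⟩
    have h6 : p ^ m₀ ∣ y i * p ^ (m₀ - j) := dvd_trans (pow_dvd_pow p h5) h4
    have h7 : p ^ j * p ^ (m₀ - j) ∣ y i * p ^ (m₀ - j) := by
      rw [← pow_add]
      have : j + (m₀ - j) = m₀ := by omega
      rw [this]; exact h6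
    exact (Nat.mul_dvd_mul_iff_right (Nat.pow_pos hp.pos)).mp h7
  -- contradiction with minimality of h
  refine hmin j (lt_of_lt_of_le hjklt hkh) ⟨(fun i => ((y i / p ^ j : ℕ) : ℤ) + x i), ?_⟩
  have hw : ∏ i, α i ^ (((y i / p ^ j : ℕ) : ℤ) + x i) =
      (∏ i, α i ^ ((y i / p ^ j : ℕ) : ℤ)) * ∏ i, α i ^ x i := by
    rw [← Finset.prod_mul_distrib]
    exact Finset.prod_congr rfl fun i _ => by rw [zpow_add]
  have hyw : (∏ i, α i ^ ((y i / p ^ j : ℕ) : ℤ)) ^ (p ^ j) = γ ^ (p ^ j) := by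
    rw [← hyeq, ← Finset.prod_pow]
    refine Finset.prod_congr rfl fun i _ => ?_
    rw [zpow_natCast, ← pow_mul]
    congr 1
    exact (Nat.div_mul_cancel (hdvd i))
  rw [hw, mul_pow, hyw, hγdef, mul_pow, inv_pow]
  rw [mul_assoc, inv_mul_cancel, mul_one]
end

section
/- Let p be a prime, let α = (α₁, …, α_r) be a basis for a subgroup of a finite abelian p-group G, let β ∈ G, let x be an integer vector, and set γ = β · α^{−x}. Suppose ord(γ) = p^h and that for every integer h' with 0 ≤ h' < h there is no integer vector y with β^{p^{h'}} = (α₁^{y₁} ⋯ α_r^{y_r})^{p^{h'}}. Let α' be the subtuple of α consisting of those components α_i with ord(α_i) ≥ ord(γ). Then the tuple obtained by appending γ to α' is a basis for the subgroup generated by the components of α' together with γ. -/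
lemma exists_zpow_prod {G : Type*} [CommGroup G] {ι : Type*} [Fintype ι]
    (δ : ι → G) {g : G} (hg : g ∈ Subgroup.closure (Set.range δ)) :
    ∃ z : ι → ℤ, ∏ i, δ i ^ z i = g := by
  classical
  induction hg using Subgroup.closure_induction with
  | mem x hx =>
    obtain ⟨i, rfl⟩ := hx
    refine ⟨fun j => if j = i then 1 else 0, ?_⟩
    rw [Fintype.prod_eq_single i (fun j hj => by simp [hj])]
    simp
  | one => exact ⟨0, by simp⟩
  | mul a b _ _ ha hb =>
    obtain ⟨za, rfl⟩ := ha; obtain ⟨zb, rfl⟩ := hb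
    exact ⟨za + zb, by simp [zpow_add, Finset.prod_mul_distrib]⟩
  | inv a _ ha =>
    obtain ⟨za, rfl⟩ := ha
    exact ⟨-za, by simp [zpow_neg]⟩

lemma exists_nat_repr {G : Type*} [CommGroup G] [Fintype G] {ι : Type*} [Fintype ι]
    (δ : ι → G) (z : ι → ℤ) :
    ∃ n : ι → ℕ, (∀ i, n i < orderOf (δ i)) ∧ ∏ i, δ i ^ n i = ∏ i, δ i ^ z i := by
  refine ⟨fun i => (z i % (orderOf (δ i) : ℤ)).toNat, fun i => ?_, ?_⟩
  · show (z i % (orderOf (δ i) : ℤ)).toNat < orderOf (δ i)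
    have hpos : 0 < orderOf (δ i) := orderOf_pos _
    have h1 := Int.emod_nonneg (z i) (Int.natCast_ne_zero.mpr hpos.ne')
    have h2 := Int.emod_lt_of_pos (z i) (Int.natCast_pos.mpr hpos)
    omega
  · refine Finset.prod_congr rfl fun i _ => ?_
    have hpos : 0 < orderOf (δ i) := orderOf_pos _
    have h1 := Int.emod_nonneg (z i) (Int.natCast_ne_zero.mpr hpos.ne')
    rw [← zpow_natCast, Int.toNat_of_nonneg h1, zpow_mod_orderOf]

lemma basis_indep {G : Type*} [CommGroup G] [Fintype G] {ι : Type*} [Fintype ι]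
    (δ : ι → G) (hδ : IsBasis δ (Subgroup.closure (Set.range δ)))
    {y : ι → ℤ} (hy : ∏ i, δ i ^ y i = 1) :
    ∀ i, ((orderOf (δ i) : ℤ)) ∣ y i := by
  obtain ⟨-, huniq⟩ := hδ
  obtain ⟨w, -, hwu⟩ := huniq 1 (one_mem _)
  have h0 : (fun _ => 0 : ι → ℕ) = w := hwu _ ⟨fun i => orderOf_pos _, by simp⟩
  have hn : (fun i => (y i % (orderOf (δ i) : ℤ)).toNat) = w := by
    refine hwu _ ⟨fun i => ?_, ?_⟩
    · show (y i % (orderOf (δ i) : ℤ)).toNat < orderOf (δ i)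
      have hpos : 0 < orderOf (δ i) := orderOf_pos _
      have h1 := Int.emod_nonneg (y i) (Int.natCast_ne_zero.mpr hpos.ne')
      have h2 := Int.emod_lt_of_pos (y i) (Int.natCast_pos.mpr hpos)
      omega
    · rw [← hy]
      refine Finset.prod_congr rfl fun i _ => ?_
      have hpos : 0 < orderOf (δ i) := orderOf_pos _
      have h1 := Int.emod_nonneg (y i) (Int.natCast_ne_zero.mpr hpos.ne')
      rw [← zpow_natCast, Int.toNat_of_nonneg h1, zpow_mod_orderOf]
  intro i
  have : (y i % (orderOf (δ i) : ℤ)).toNat = 0 := by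
    have := hn.trans h0.symm
    exact congrFun this i
  have hpos : 0 < orderOf (δ i) := orderOf_pos _
  have h1 := Int.emod_nonneg (y i) (Int.natCast_ne_zero.mpr hpos.ne')
  exact Int.dvd_of_emod_eq_zero (by omega)

/-- corollary to Lemma 5 used in Algorithm 5: if `γ = β ⬝ α^{-x}`
has order `p^h` and no integer vector `y` satisfies `β^{p^{h'}} = (α^y)^{p^{h'}}`
for any `h' < h`, then appending `γ` to the subtuple `α'` of components `α i` with
`orderOf (α i) ≥ orderOf γ` yields a basis for the subgroup generated by `α'` and `γ`. -/
theorem append_to_subtuple_isBasis {p : ℕ} (hp : p.Prime) {G : Type*} [CommGroup G]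
    [Fintype G] (hG : IsPGroup p G) {r : ℕ} (α : Fin r → G)
    (hα : IsBasis α (Subgroup.closure (Set.range α)))
    (β : G) (x : Fin r → ℤ) (h : ℕ)
    (hγord : orderOf (β * (∏ i, α i ^ x i)⁻¹) = p ^ h)
    (hmin : ∀ h' < h, ¬ ∃ y : Fin r → ℤ, β ^ p ^ h' = (∏ i, α i ^ y i) ^ p ^ h') :
    IsBasis
      (fun o : Option {i : Fin r //
          orderOf (β * (∏ i, α i ^ x i)⁻¹) ≤ orderOf (α i)} =>
        o.elim (β * (∏ i, α i ^ x i)⁻¹) fun i => α i.1)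
      (Subgroup.closure (Set.range
        (fun o : Option {i : Fin r //
            orderOf (β * (∏ i, α i ^ x i)⁻¹) ≤ orderOf (α i)} =>
          o.elim (β * (∏ i, α i ^ x i)⁻¹) fun i => α i.1))) := by
  classical
  haveI : Fact p.Prime := ⟨hp⟩
  set γ : G := β * (∏ i, α i ^ x i)⁻¹ with hγdef
  set δ : Option {i : Fin r // orderOf γ ≤ orderOf (α i)} → G :=
    fun o => o.elim γ fun i => α i.1 with hδdef
  have indep : ∀ y : Fin r → ℤ, ∏ i, α i ^ y i = 1 → ∀ i, ((orderOf (α i) : ℤ)) ∣ y i :=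
    fun y hy => basis_indep α hα hy
  have hγpow : γ ^ p ^ h = 1 := hγord ▸ pow_orderOf_eq_one γ
  -- Claim: if a power of γ lies in the span of the subtuple, the exponent is divisible by p^h
  have claimC : ∀ (e : {i : Fin r // orderOf γ ≤ orderOf (α i)} → ℤ) (c : ℤ),
      γ ^ c = ∏ s, α s.1 ^ e s → ((p : ℤ) ^ h) ∣ c := by
    intro e c hc
    by_contra hndvd
    set m : ℕ := Int.gcd c ((p : ℤ) ^ h) with hm
    have hmdvdZ : (m : ℤ) ∣ (p : ℤ) ^ h := Int.gcd_dvd_right c ((p : ℤ) ^ h)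
    have hmdvd : m ∣ p ^ h := by
      have h0 : (m : ℤ) ∣ ((p ^ h : ℕ) : ℤ) := by push_cast; exact hmdvdZ
      exact_mod_cast h0
    obtain ⟨h', hh'le, hm'⟩ := (Nat.dvd_prime_pow hp).mp hmdvd
    have hh' : h' < h := by
      rcases lt_or_eq_of_le hh'le with hlt | rfl
      · exact hlt
      · exfalso; apply hndvd
        have h0 : (m : ℤ) ∣ c := Int.gcd_dvd_left c _
        rw [hm'] at h0; push_cast at h0; exact h0
    have hbez : (m : ℤ) = c * Int.gcdA c ((p:ℤ)^h) + (p:ℤ)^h * Int.gcdB c ((p:ℤ)^h) :=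
      Int.gcd_eq_gcd_ab c ((p:ℤ)^h)
    set A := Int.gcdA c ((p:ℤ)^h) with hA
    have hγph : γ ^ ((p:ℤ) ^ h) = 1 := by
      rw [show ((p:ℤ)^h) = ((p^h : ℕ) : ℤ) by push_cast; ring, zpow_natCast, hγpow]
    have h1 : γ ^ ((p:ℤ) ^ h') = ∏ s, α s.1 ^ (e s * A) := by
      have e1 : γ ^ ((m:ℤ)) = (γ ^ c) ^ A * (γ ^ ((p:ℤ)^h)) ^ (Int.gcdB c ((p:ℤ)^h)) := by
        rw [← zpow_mul, ← zpow_mul, ← zpow_add, ← hbez]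
      rw [hγph, one_zpow, mul_one, hc] at e1
      rw [show ((p:ℤ)^h') = (m:ℤ) by rw [hm']; push_cast; ring, e1, ← Finset.prod_zpow]
      exact Finset.prod_congr rfl fun s _ => by rw [← zpow_mul]
    have h2 : ∏ s, α s.1 ^ (e s * A * (p:ℤ)^(h - h')) = 1 := by
      have e2 : (∏ s, α s.1 ^ (e s * A)) ^ ((p:ℤ)^(h-h')) = γ ^ ((p:ℤ)^h' * (p:ℤ)^(h-h')) := by
        rw [← h1, ← zpow_mul]
      rw [show ((p:ℤ)^h' * (p:ℤ)^(h-h')) = (p:ℤ)^h by rw [← pow_add]; congr 1; omega,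
        hγph, ← Finset.prod_zpow] at e2
      rw [← e2]
      exact Finset.prod_congr rfl fun s _ => by rw [← zpow_mul]
    set E : Fin r → ℤ := fun i =>
      if hi : orderOf γ ≤ orderOf (α i) then e ⟨i, hi⟩ * A * (p:ℤ)^(h - h') else 0 with hEdef
    have hEprod : ∏ i, α i ^ E i = 1 := by
      rw [← Finset.prod_filter_mul_prod_filter_not Finset.univ
        (fun i => orderOf γ ≤ orderOf (α i))]
      have ha : ∏ i ∈ Finset.univ.filter (fun i => orderOf γ ≤ orderOf (α i)), α i ^ E i
          = ∏ s : {i : Fin r // orderOf γ ≤ orderOf (α i)}, α s.1 ^ E s.1 :=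
        Finset.prod_subtype _ (by simp) _
      have hb : ∏ i ∈ Finset.univ.filter
          (fun i => ¬ orderOf γ ≤ orderOf (α i)), α i ^ E i = 1 := by
        refine Finset.prod_eq_one fun i hi => ?_
        rw [Finset.mem_filter] at hi
        rw [hEdef]; simp only [dif_neg hi.2, zpow_zero]
      rw [ha, hb, mul_one, ← h2]
      refine Finset.prod_congr rfl fun s _ => ?_
      rw [hEdef]; simp only [dif_pos s.2, Subtype.coe_eta]
    have hdvdE := indep E hEprod
    -- each e s * A is divisible by p ^ h'
    have hdvd' : ∀ s : {i : Fin r // orderOf γ ≤ orderOf (α i)}, ((p:ℤ)^h') ∣ e s * A := by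
      intro s
      obtain ⟨k, hk⟩ := (IsPGroup.iff_orderOf.mp hG) (α s.1)
      have hhk : h ≤ k := by
        have hle : p ^ h ≤ orderOf (α s.1) := by rw [← hγord]; exact s.2
        rw [hk] at hle
        exact (Nat.pow_le_pow_iff_right hp.one_lt).mp hle
      have hd := hdvdE s.1
      rw [hEdef] at hd
      simp only [dif_pos s.2, Subtype.coe_eta] at hd
      rw [hk] at hd
      have hd2 : ((p:ℤ)^(k - (h - h')) * (p:ℤ)^(h - h')) ∣ (e s * A) * (p:ℤ)^(h - h') := by
        rw [← pow_add, show k - (h - h') + (h - h') = k by omega]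
        exact_mod_cast hd
      have hd3 : ((p:ℤ)^(k - (h - h'))) ∣ e s * A :=
        (mul_dvd_mul_iff_right (pow_ne_zero _ (by exact_mod_cast hp.ne_zero :
          (p:ℤ) ≠ 0))).mp hd2
      exact dvd_trans (pow_dvd_pow _ (by omega)) hd3
    choose f hf using hdvd'
    refine hmin h' hh' ⟨fun i => x i +
      (if hi : orderOf γ ≤ orderOf (α i) then f ⟨i, hi⟩ else 0), ?_⟩
    have hβ : β = γ * ∏ i, α i ^ x i := by
      rw [hγdef]; exact (inv_mul_cancel_right β _).symm
    -- final computation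
    have hγh' : γ ^ ((p:ℤ)^h') = (∏ s, α s.1 ^ f s) ^ ((p:ℤ)^h') := by
      rw [h1, ← Finset.prod_zpow]
      exact Finset.prod_congr rfl fun s _ => by rw [← zpow_mul, hf s, mul_comm]
    have hFone : ∏ i, α i ^ (if hi : orderOf γ ≤ orderOf (α i) then f ⟨i, hi⟩ else 0)
        = ∏ s, α s.1 ^ f s := by
      rw [← Finset.prod_filter_mul_prod_filter_not Finset.univ
        (fun i => orderOf γ ≤ orderOf (α i))]
      have ha : ∏ i ∈ Finset.univ.filter (fun i => orderOf γ ≤ orderOf (α i)),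
          α i ^ (if hi : orderOf γ ≤ orderOf (α i) then f ⟨i, hi⟩ else 0)
          = ∏ s : {i : Fin r // orderOf γ ≤ orderOf (α i)},
            α s.1 ^ (if hi : orderOf γ ≤ orderOf (α s.1) then f ⟨s.1, hi⟩ else 0) :=
        Finset.prod_subtype _ (by simp) _
      have hb : ∏ i ∈ Finset.univ.filter
          (fun i => ¬ orderOf γ ≤ orderOf (α i)),
          α i ^ (if hi : orderOf γ ≤ orderOf (α i) then f ⟨i, hi⟩ else 0) = 1 := by
        refine Finset.prod_eq_one fun i hi => ?_
        rw [Finset.mem_filter] at hi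
        simp only [dif_neg hi.2, zpow_zero]
      rw [ha, hb, mul_one]
      exact Finset.prod_congr rfl fun s _ => by simp only [dif_pos s.2, Subtype.coe_eta]
    have hFprod : ∏ i, α i ^ (x i +
        (if hi : orderOf γ ≤ orderOf (α i) then f ⟨i, hi⟩ else 0))
        = (∏ i, α i ^ x i) * ∏ s, α s.1 ^ f s := by
      rw [← hFone, ← Finset.prod_mul_distrib]
      exact Finset.prod_congr rfl fun i _ => (zpow_add _ _ _)
    have hnat : ∀ g : G, g ^ ((p:ℤ)^h') = g ^ (p ^ h') := fun g => by
      rw [show ((p:ℤ)^h') = ((p^h' : ℕ) : ℤ) by push_cast; ring, zpow_natCast]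
    show β ^ p ^ h' = (∏ i, α i ^ (x i +
        (if hi : orderOf γ ≤ orderOf (α i) then f ⟨i, hi⟩ else 0))) ^ p ^ h'
    rw [hFprod]
    calc β ^ p ^ h' = γ ^ p ^ h' * (∏ i, α i ^ x i) ^ p ^ h' := by rw [hβ, mul_pow]
      _ = (∏ s, α s.1 ^ f s) ^ p ^ h' * (∏ i, α i ^ x i) ^ p ^ h' := by
          rw [← hnat γ, ← hnat (∏ s, α s.1 ^ f s), hγh']
      _ = ((∏ i, α i ^ x i) * ∏ s, α s.1 ^ f s) ^ p ^ h' := by rw [mul_pow, mul_comm]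
  constructor
  · rfl
  · intro b hb
    obtain ⟨z, hz⟩ := exists_zpow_prod δ hb
    obtain ⟨n, hn1, hn2⟩ := exists_nat_repr δ z
    have uniq : ∀ c d : Option {i : Fin r // orderOf γ ≤ orderOf (α i)} → ℕ,
        (∀ o, c o < orderOf (δ o)) → (∀ o, d o < orderOf (δ o)) →
        ∏ o, δ o ^ c o = ∏ o, δ o ^ d o → c = d := by
      intro c d hcb hdb hcd
      have key0 : ∏ o, δ o ^ ((c o : ℤ) - (d o : ℤ)) = 1 := by
        have heq : ∏ o, δ o ^ ((c o : ℤ) - (d o : ℤ))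
            = (∏ o, δ o ^ c o) * (∏ o, δ o ^ d o)⁻¹ := by
          rw [← Finset.prod_inv_distrib, ← Finset.prod_mul_distrib]
          exact Finset.prod_congr rfl fun o _ => by
            rw [zpow_sub, zpow_natCast, zpow_natCast]
        rw [heq, hcd, mul_inv_cancel]
      rw [Fintype.prod_option] at key0
      have key : γ ^ ((c none : ℤ) - d none)
          = ∏ s, α s.1 ^ ((d (some s) : ℤ) - c (some s)) := by
        have h1 : (δ none : G) ^ ((c none : ℤ) - d none)
            = (∏ s, δ (some s) ^ ((c (some s) : ℤ) - d (some s)))⁻¹ :=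
          eq_inv_of_mul_eq_one_left key0
        rw [show (δ none : G) = γ from rfl] at h1
        rw [h1, ← Finset.prod_inv_distrib]
        exact Finset.prod_congr rfl fun s _ => by
          rw [show (δ (some s) : G) = α s.1 from rfl, ← zpow_neg, neg_sub]
      have hdvd := claimC _ _ key
      have hc0 : (c none : ℤ) - d none = 0 := by
        refine Int.eq_zero_of_abs_lt_dvd hdvd ?_
        have h1 : c none < p ^ h := by
          have := hcb none; rwa [show orderOf (δ none) = p ^ h from hγord] at this
        have h2 : d none < p ^ h := by
          have := hdb none; rwa [show orderOf (δ none) = p ^ h from hγord] at this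
        have h1' : (c none : ℤ) < (p : ℤ) ^ h := by exact_mod_cast h1
        have h2' : (d none : ℤ) < (p : ℤ) ^ h := by exact_mod_cast h2
        rw [abs_lt]; omega
      have htail : ∀ s, c (some s) = d (some s) := by
        have h1 : ∏ s, α s.1 ^ ((d (some s) : ℤ) - c (some s)) = 1 := by
          rw [← key, hc0, zpow_zero]
        set E : Fin r → ℤ := fun i =>
          if hi : orderOf γ ≤ orderOf (α i) then
            (d (some ⟨i, hi⟩) : ℤ) - c (some ⟨i, hi⟩) else 0 with hEdef
        have hEprod : ∏ i, α i ^ E i = 1 := by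
          rw [← Finset.prod_filter_mul_prod_filter_not Finset.univ
            (fun i => orderOf γ ≤ orderOf (α i))]
          have ha : ∏ i ∈ Finset.univ.filter (fun i => orderOf γ ≤ orderOf (α i)),
              α i ^ E i
              = ∏ s : {i : Fin r // orderOf γ ≤ orderOf (α i)}, α s.1 ^ E s.1 :=
            Finset.prod_subtype _ (by simp) _
          have hb : ∏ i ∈ Finset.univ.filter
              (fun i => ¬ orderOf γ ≤ orderOf (α i)), α i ^ E i = 1 := by
            refine Finset.prod_eq_one fun i hi => ?_
            rw [Finset.mem_filter] at hi
            rw [hEdef]; simp only [dif_neg hi.2, zpow_zero]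
          rw [ha, hb, mul_one, ← h1]
          refine Finset.prod_congr rfl fun s _ => ?_
          rw [hEdef]; simp only [dif_pos s.2, Subtype.coe_eta]
        have hdd := indep E hEprod
        intro s
        have hsd := hdd s.1
        rw [hEdef] at hsd
        simp only [dif_pos s.2, Subtype.coe_eta] at hsd
        have hb1 : c (some s) < orderOf (α s.1) := hcb (some s)
        have hb2 : d (some s) < orderOf (α s.1) := hdb (some s)
        have := Int.eq_zero_of_abs_lt_dvd hsd
          (by rw [abs_lt]; constructor <;> push_cast <;> omega)
        omega
      funext o
      cases o with
      | none =>
        have : (c none : ℤ) = d none := by omega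
        exact_mod_cast this
      | some s => exact htail s
    exact ⟨n, ⟨hn1, hn2.trans hz⟩,
      fun n' hn' => uniq n' n hn'.1 hn1 (hn'.2.trans (hn2.trans hz).symm)⟩
end

section
/- For every real number a > 1, every integer n ≥ 1, and all real numbers x₁, …, x_n with each x_i ≥ a, one has ∑_{i=1}^n x_i ≤ c · ∏_{i=1}^n x_i, where c = a/e^{1 + ln ln a} = a/(e · ln a). -/
/-- `e * t ≤ exp t` for all real `t`. -/
lemma mul_exp_one_le_exp (t : ℝ) : Real.exp 1 * t ≤ Real.exp t := by
  have h := Real.add_one_le_exp (t - 1)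
  have : Real.exp t = Real.exp 1 * Real.exp (t - 1) := by
    rw [← Real.exp_add]; ring_nf
  rw [this]
  nlinarith [Real.exp_pos (1 : ℝ), Real.add_one_le_exp (t - 1)]

/-- Appendix lemma: for every real `a > 1` and all reals
`x₁, …, x_n ≥ a` (with `n ≥ 1`), `∑ x i ≤ c ⬝ ∏ x i` where
`c = a / e^{1 + ln ln a} = a / (e ⬝ ln a)`. -/
theorem sum_le_const_mul_prod (a : ℝ) (ha : 1 < a) (n : ℕ) (hn : 1 ≤ n)
    (x : Fin n → ℝ) (hx : ∀ i, a ≤ x i) :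
    ∑ i, x i ≤ a / (Real.exp 1 * Real.log a) * ∏ i, x i := by
  have hla : 0 < Real.log a := Real.log_pos ha
  have ha0 : (0:ℝ) < a := by linarith
  have hxpos : ∀ i, 0 < x i := fun i => lt_of_lt_of_le (by linarith) (hx i)
  have hprodpos : 0 < ∏ i, x i := Finset.prod_pos (fun i _ => hxpos i)
  have hapow : (0:ℝ) < a ^ (n - 1) := pow_pos ha0 _
  -- each xᵢ times a^(n-1) is at most the product
  have key : ∀ i, x i * a ^ (n - 1) ≤ ∏ j, x j := by
    intro i
    rw [← Finset.mul_prod_erase Finset.univ x (Finset.mem_univ i)]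
    have hcard : (Finset.univ.erase i).card = n - 1 := by
      rw [Finset.card_erase_of_mem (Finset.mem_univ i), Finset.card_univ,
        Fintype.card_fin]
    have hle : a ^ (n - 1) ≤ ∏ j ∈ Finset.univ.erase i, x j := by
      calc a ^ (n - 1) = ∏ _j ∈ Finset.univ.erase i, a := by
            rw [Finset.prod_const, hcard]
        _ ≤ ∏ j ∈ Finset.univ.erase i, x j :=
            Finset.prod_le_prod (fun j _ => le_of_lt ha0) (fun j _ => hx j)
    exact mul_le_mul_of_nonneg_left hle (hxpos i).le
  -- hence the sum is ≤ n * (∏ / a^(n-1))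
  have hsum : ∑ i, x i ≤ (n : ℝ) * ((∏ j, x j) / a ^ (n - 1)) := by
    calc ∑ i, x i ≤ ∑ _i : Fin n, (∏ j, x j) / a ^ (n - 1) := by
          apply Finset.sum_le_sum
          intro i _
          rw [le_div_iff₀ hapow]
          exact key i
      _ = (n : ℝ) * ((∏ j, x j) / a ^ (n - 1)) := by
          rw [Finset.sum_const, Finset.card_univ, Fintype.card_fin, nsmul_eq_mul]
  refine hsum.trans ?_
  -- reduce to n * e * ln a ≤ a^n
  have hkey : (n : ℝ) * (Real.exp 1 * Real.log a) ≤ a ^ n := by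
    have : a ^ n = Real.exp ((n : ℝ) * Real.log a) := by
      rw [Real.exp_nat_mul, Real.exp_log ha0]
    rw [this]
    have := mul_exp_one_le_exp ((n : ℝ) * Real.log a)
    linarith
  have hpow : a ^ n = a ^ (n - 1) * a := by
    rw [← pow_succ]
    congr 1
    omega
  rw [div_mul_eq_mul_div, le_div_iff₀ (by positivity)]
  have heq : (n : ℝ) * ((∏ j, x j) / a ^ (n - 1)) * (Real.exp 1 * Real.log a)
      = ((n : ℝ) * (Real.exp 1 * Real.log a)) * (∏ j, x j) / a ^ (n - 1) := by
    ring
  rw [heq, div_le_iff₀ hapow]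
  calc ((n : ℝ) * (Real.exp 1 * Real.log a)) * ∏ j, x j
      ≤ a ^ n * ∏ j, x j := mul_le_mul_of_nonneg_right hkey hprodpos.le
    _ = a * (∏ j, x j) * a ^ (n - 1) := by rw [hpow]; ring
end

section
/- Let a > 1 be a real number and define g(t) = t · a^{1−t} for real t ≥ 0 (so g(0) = 0). Then the supremum of (∑_{i=1}^n x_i)/(∏_{i=1}^n x_i) over all integers n ≥ 1 and all real numbers x₁, …, x_n ≥ a equals max(g(⌊1/ln a⌋), g(⌈1/ln a⌉)); this value equals the maximum of g(n) = n·a^{1−n} over positive integers n, and it is attained (by taking n a maximizing positive integer and all x_i = a). -/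
/-- `g a t = t ⬝ a^{1-t}`, where `a^{1-t}` is the real power `e^{(1-t) ln a}`. -/
noncomputable def g (a t : ℝ) : ℝ := t * a ^ (1 - t)

lemma g_exp (a t : ℝ) (ha : 0 < a) : g a t = t * Real.exp ((1 - t) * Real.log a) := by
  rw [g, Real.rpow_def_of_pos ha]; ring_nf

lemma g_deriv (a t : ℝ) (ha : 0 < a) :
    HasDerivAt (fun t => t * Real.exp ((1 - t) * Real.log a))
      (Real.exp ((1 - t) * Real.log a) * (1 - t * Real.log a)) t := by
  have h1 : HasDerivAt (fun t : ℝ => (1 - t) * Real.log a) (-Real.log a) t := by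
    simpa using ((hasDerivAt_const t (1:ℝ)).sub (hasDerivAt_id t)).mul_const (Real.log a)
  have h2 := h1.exp
  have h3 := (hasDerivAt_id t).mul h2
  exact h3.congr_deriv (by simp only [id]; ring)

lemma g_mono (a : ℝ) (ha : 1 < a) : MonotoneOn (g a) (Set.Icc 0 (1 / Real.log a)) := by
  have ha0 : (0:ℝ) < a := by linarith
  have hL : 0 < Real.log a := Real.log_pos ha
  have hg : Set.EqOn (g a) (fun t => t * Real.exp ((1 - t) * Real.log a)) (Set.Icc 0 (1 / Real.log a)) :=
    fun t _ => g_exp a t ha0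
  refine MonotoneOn.congr ?_ hg.symm
  apply monotoneOn_of_deriv_nonneg (convex_Icc _ _)
  · exact Continuous.continuousOn (by continuity)
  · intro t ht
    exact (g_deriv a t ha0).differentiableAt.differentiableWithinAt
  · intro t ht
    rw [interior_Icc] at ht
    rw [(g_deriv a t ha0).deriv]
    have : t * Real.log a ≤ 1 := by
      rw [← le_div_iff₀ hL] at *
      exact ht.2.le
    exact mul_nonneg (Real.exp_nonneg _) (by linarith)

lemma g_anti (a : ℝ) (ha : 1 < a) : AntitoneOn (g a) (Set.Ici (1 / Real.log a)) := by
  have ha0 : (0:ℝ) < a := by linarith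
  have hL : 0 < Real.log a := Real.log_pos ha
  have hg : Set.EqOn (g a) (fun t => t * Real.exp ((1 - t) * Real.log a)) (Set.Ici (1 / Real.log a)) :=
    fun t _ => g_exp a t ha0
  refine AntitoneOn.congr ?_ hg.symm
  apply antitoneOn_of_deriv_nonpos (convex_Ici _)
  · exact Continuous.continuousOn (by continuity)
  · intro t ht
    exact (g_deriv a t ha0).differentiableAt.differentiableWithinAt
  · intro t ht
    rw [interior_Ici] at ht
    rw [(g_deriv a t ha0).deriv]
    have : 1 ≤ t * Real.log a := by
      rw [Set.mem_Ioi, div_lt_iff₀ hL] at ht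
      linarith
    exact mul_nonpos_of_nonneg_of_nonpos (Real.exp_nonneg _) (by linarith)

lemma g_nat (a : ℝ) (ha : 0 < a) (n : ℕ) : g a n = n * a / a ^ n := by
  rw [g, show (1 - (n:ℝ)) = 1 + (-(n:ℝ)) by ring, Real.rpow_add ha, Real.rpow_one,
    Real.rpow_neg ha.le, Real.rpow_natCast]
  ring

lemma g_le_max (a : ℝ) (ha : 1 < a) (n : ℕ) :
    g a n ≤ max (g a (⌊1 / Real.log a⌋₊ : ℕ)) (g a (⌈1 / Real.log a⌉₊ : ℕ)) := by
  have hL : 0 < Real.log a := Real.log_pos ha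
  have ht : 0 < 1 / Real.log a := by positivity
  rcases le_or_gt n ⌊1 / Real.log a⌋₊ with h | h
  · refine le_trans ?_ (le_max_left _ _)
    have hF : ((⌊1 / Real.log a⌋₊ : ℕ) : ℝ) ≤ 1 / Real.log a := Nat.floor_le ht.le
    exact g_mono a ha ⟨by positivity, le_trans (by exact_mod_cast h) hF⟩
      ⟨by positivity, hF⟩ (by exact_mod_cast h)
  · refine le_trans ?_ (le_max_right _ _)
    have hC : 1 / Real.log a ≤ ((⌈1 / Real.log a⌉₊ : ℕ) : ℝ) := Nat.le_ceil _
    have hCn : ⌈1 / Real.log a⌉₊ ≤ n :=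
      le_trans (Nat.ceil_le_floor_add_one _) h
    exact g_anti a ha hC (le_trans hC (by exact_mod_cast hCn)) (by exact_mod_cast hCn)

lemma max_attained (a : ℝ) (ha : 1 < a) :
    ∃ n : ℕ, 1 ≤ n ∧ g a n = max (g a (⌊1 / Real.log a⌋₊ : ℕ)) (g a (⌈1 / Real.log a⌉₊ : ℕ)) := by
  have hL : 0 < Real.log a := Real.log_pos ha
  have ht : 0 < 1 / Real.log a := by positivity
  have hC : 1 ≤ ⌈1 / Real.log a⌉₊ := Nat.one_le_ceil_iff.mpr ht
  rcases Nat.eq_zero_or_pos ⌊1 / Real.log a⌋₊ with hF | hF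
  · refine ⟨⌈1 / Real.log a⌉₊, hC, ?_⟩
    have h0 : g a (⌊1 / Real.log a⌋₊ : ℕ) = 0 := by rw [hF]; simp [g]
    have hpos : 0 < g a (⌈1 / Real.log a⌉₊ : ℕ) := by
      rw [g]
      have : (0:ℝ) < (⌈1 / Real.log a⌉₊ : ℝ) := by exact_mod_cast hC
      positivity
    rw [h0, max_eq_right hpos.le]
  · rcases le_total (g a (⌊1 / Real.log a⌋₊ : ℕ)) (g a (⌈1 / Real.log a⌉₊ : ℕ)) with h | h
    · exact ⟨_, hC, (max_eq_right h).symm⟩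
    · exact ⟨_, hF, (max_eq_left h).symm⟩

lemma ratio_le (a : ℝ) (ha : 1 < a) (n : ℕ) (hn : 1 ≤ n) (x : Fin n → ℝ)
    (hx : ∀ i, a ≤ x i) : (∑ i, x i) / ∏ i, x i ≤ g a n := by
  have ha0 : (0:ℝ) < a := by linarith
  have hxp : ∀ i, 0 < x i := fun i => lt_of_lt_of_le ha0 (hx i)
  rw [Finset.sum_div]
  have key : ∀ i : Fin n, x i / ∏ j, x j ≤ a / a ^ n := by
    intro i
    have hsplit : ∏ j, x j = x i * ∏ j ∈ Finset.univ.erase i, x j :=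
      (Finset.mul_prod_erase _ _ (Finset.mem_univ i)).symm
    have hPe : a ^ (n - 1) ≤ ∏ j ∈ Finset.univ.erase i, x j := by
      calc a ^ (n - 1) = ∏ _j ∈ Finset.univ.erase i, a := by
            rw [Finset.prod_const, Finset.card_erase_of_mem (Finset.mem_univ i),
              Finset.card_univ, Fintype.card_fin]
        _ ≤ _ := Finset.prod_le_prod (fun _ _ => ha0.le) (fun j _ => hx j)
    have hPe0 : (0:ℝ) < ∏ j ∈ Finset.univ.erase i, x j :=
      lt_of_lt_of_le (by positivity) hPe
    have h1 : x i / (x i * ∏ j ∈ Finset.univ.erase i, x j) = 1 / ∏ j ∈ Finset.univ.erase i, x j := by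
      rw [div_mul_eq_div_div, div_self (hxp i).ne']
    rw [hsplit, h1, show a / a ^ n = 1 / a ^ (n-1) by
      rw [eq_div_iff (by positivity), div_mul_eq_mul_div, ← pow_succ', Nat.sub_add_cancel hn,
        div_self (by positivity)]]
    exact one_div_le_one_div_of_le (by positivity) hPe
  calc ∑ i : Fin n, x i / ∏ j, x j ≤ ∑ _i : Fin n, a / a ^ n :=
        Finset.sum_le_sum (fun i _ => key i)
    _ = n * a / a ^ n := by rw [Finset.sum_const, Finset.card_univ, Fintype.card_fin]; ring
    _ = g a n := (g_nat a ha0 n).symm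

/-- equation (14) of the paper: for real `a > 1`, the supremum
of `(∑ x i) / (∏ x i)` over all `n ≥ 1` and all reals `x₁, …, x_n ≥ a` is attained
and equals `max (g ⌊1/ln a⌋) (g ⌈1/ln a⌉)`, which is also the maximum of
`g n = n ⬝ a^{1-n}` over positive integers `n`. -/
theorem sup_ratio_eq_max_g (a : ℝ) (ha : 1 < a) :
    IsGreatest
      { y : ℝ | ∃ n : ℕ, 1 ≤ n ∧ ∃ x : Fin n → ℝ,
          (∀ i, a ≤ x i) ∧ y = (∑ i, x i) / ∏ i, x i }
      (max (g a (⌊1 / Real.log a⌋₊ : ℕ)) (g a (⌈1 / Real.log a⌉₊ : ℕ))) ∧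
    IsGreatest { y : ℝ | ∃ n : ℕ, 1 ≤ n ∧ y = g a n }
      (max (g a (⌊1 / Real.log a⌋₊ : ℕ)) (g a (⌈1 / Real.log a⌉₊ : ℕ))) := by
  have ha0 : (0:ℝ) < a := by linarith
  obtain ⟨n₀, hn₀, hgn₀⟩ := max_attained a ha
  constructor
  · constructor
    · refine ⟨n₀, hn₀, fun _ => a, fun _ => le_refl a, ?_⟩
      rw [← hgn₀, g_nat a ha0 n₀, Finset.sum_const, Finset.prod_const, Finset.card_univ,
        Fintype.card_fin, nsmul_eq_mul]
    · rintro y ⟨n, hn, x, hx, rfl⟩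
      exact le_trans (ratio_le a ha n hn x hx) (g_le_max a ha n)
  · constructor
    · exact ⟨n₀, hn₀, hgn₀.symm⟩
    · rintro y ⟨n, hn, rfl⟩
      exact g_le_max a ha n
end

section
/- Define f(x) = x · log₂(x+1)/log₂ log₂(x+2) for real x ≥ 1. Then for every finite sequence of positive integers m₁, …, m_j and every positive integer m with m₁ + ⋯ + m_j ≤ m, one has ∑_{i=1}^j f(m_i) ≤ f(m). -/
open Real Set

/-- `f x = x ⬝ log₂(x+1) / log₂ log₂ (x+2)`. -/
noncomputable def f (x : ℝ) : ℝ :=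
  x * Real.logb 2 (x + 1) / Real.logb 2 (Real.logb 2 (x + 2))

namespace SumFAux

/-- Auxiliary function: `A s = (s-1)/(s log s)`. -/
noncomputable def A (s : ℝ) : ℝ := (s - 1) / (s * Real.log s)

/-- `φ t = log₂ log₂ (2^t + 1)`. -/
noncomputable def phi (t : ℝ) : ℝ := Real.logb 2 (Real.logb 2 ((2:ℝ) ^ t + 1))

lemma hasDerivAt_A {s : ℝ} (hs : 1 < s) :
    HasDerivAt A ((1 * (s * Real.log s) - (s - 1) * (Real.log s + 1)) / (s * Real.log s) ^ 2) s := by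
  have hs0 : (0:ℝ) < s := by linarith
  have hlog : 0 < Real.log s := Real.log_pos hs
  have h1 : HasDerivAt (fun x : ℝ => x - 1) 1 s := (hasDerivAt_id s).sub_const 1
  have h2 : HasDerivAt (fun x : ℝ => x * Real.log x) (Real.log s + 1) s := by
    have := (hasDerivAt_id s).mul (Real.hasDerivAt_log hs0.ne')
    exact this.congr_deriv (by simp [hs0.ne'])
  exact h1.div h2 (by positivity)

lemma A_anti : AntitoneOn A (Ici (2:ℝ)) := by
  apply antitoneOn_of_deriv_nonpos (convex_Ici 2)
  · intro s hs
    exact (hasDerivAt_A (by simp at hs; linarith)).differentiableAt.continuousAt.continuousWithinAt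
  · intro s hs
    rw [interior_Ici] at hs
    exact (hasDerivAt_A (by simp at hs; linarith)).differentiableAt.differentiableWithinAt
  · intro s hs
    rw [interior_Ici] at hs
    have hs1 : (1:ℝ) < s := by simp at hs; linarith
    have hs0 : (0:ℝ) < s := by linarith
    have hlog : 0 < Real.log s := Real.log_pos hs1
    rw [(hasDerivAt_A hs1).deriv]
    apply div_nonpos_of_nonpos_of_nonneg
    · have hle : Real.log s ≤ s - 1 := Real.log_le_sub_one_of_pos hs0
      nlinarith
    · positivity

lemma hasDerivAt_phi (t : ℝ) :
    HasDerivAt phi ((2:ℝ) ^ t / (((2:ℝ) ^ t + 1) * Real.log ((2:ℝ) ^ t + 1))) t := by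
  have hpow : (0:ℝ) < (2:ℝ) ^ t := Real.rpow_pos_of_pos two_pos t
  have hy1 : (1:ℝ) < (2:ℝ) ^ t + 1 := by linarith
  have hy0 : (0:ℝ) < (2:ℝ) ^ t + 1 := by linarith
  have hlogy : 0 < Real.log ((2:ℝ) ^ t + 1) := Real.log_pos hy1
  have hlog2 : 0 < Real.log 2 := Real.log_pos one_lt_two
  have h1 : HasDerivAt (fun x : ℝ => (2:ℝ) ^ x + 1) ((2:ℝ) ^ t * Real.log 2) t :=
    (Real.hasStrictDerivAt_const_rpow two_pos t).hasDerivAt.add_const 1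
  have h2 := h1.log hy0.ne'
  have h3 := h2.div_const (Real.log 2)
  have hz : Real.log ((2:ℝ) ^ t + 1) / Real.log 2 ≠ 0 := by positivity
  have h4 := h3.log hz
  have h5 := h4.div_const (Real.log 2)
  have hphi : phi = fun x : ℝ =>
      Real.log (Real.log ((2:ℝ) ^ x + 1) / Real.log 2) / Real.log 2 := by
    funext x
    simp [phi, Real.logb]
  rw [hphi]
  exact h5.congr_deriv (by field_simp)

lemma phi_concave : ConcaveOn ℝ (Ici (0:ℝ)) phi := by
  apply AntitoneOn.concaveOn_of_deriv (convex_Ici 0)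
  · exact fun t _ => (hasDerivAt_phi t).differentiableAt.continuousAt.continuousWithinAt
  · exact fun t _ => (hasDerivAt_phi t).differentiableAt.differentiableWithinAt
  · rw [interior_Ici]
    intro a ha b hb hab
    rw [(hasDerivAt_phi a).deriv, (hasDerivAt_phi b).deriv]
    have h2a : (2:ℝ) ≤ (2:ℝ) ^ a + 1 := by
      have : (1:ℝ) ≤ (2:ℝ) ^ a := Real.one_le_rpow one_le_two (le_of_lt ha)
      linarith
    have h2b : (2:ℝ) ≤ (2:ℝ) ^ b + 1 := by
      have : (1:ℝ) ≤ (2:ℝ) ^ b := Real.one_le_rpow one_le_two (le_of_lt hb)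
      linarith
    have hle : (2:ℝ) ^ a + 1 ≤ (2:ℝ) ^ b + 1 := by
      have := Real.rpow_le_rpow_of_exponent_le one_le_two hab
      linarith
    have := A_anti h2a h2b hle
    simpa [A, add_sub_cancel_right] using this

lemma phi_zero : phi 0 = 0 := by
  have h : (2:ℝ) ^ (0:ℝ) + 1 = 2 := by
    rw [Real.rpow_zero]; norm_num
  rw [phi, h, Real.logb_self_eq_one one_lt_two, Real.logb_one]

lemma phi_star {ta tb : ℝ} (h0 : 0 < ta) (hle : ta ≤ tb) : ta / tb * phi tb ≤ phi ta := by
  have htb : 0 < tb := lt_of_lt_of_le h0 hle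
  have hw2 : 0 ≤ ta / tb := by positivity
  have hw1 : 0 ≤ 1 - ta / tb := by
    rw [sub_nonneg]
    exact (div_le_one htb).mpr hle
  have h := phi_concave.2 (self_mem_Ici (a := (0:ℝ))) (mem_Ici.mpr htb.le) hw1 hw2 (by ring)
  simp only [smul_eq_mul, mul_zero, zero_add, phi_zero] at h
  rw [div_mul_cancel₀ ta htb.ne'] at h
  linarith

lemma one_le_logb {x : ℝ} (hx : 2 ≤ x) : 1 ≤ Real.logb 2 x := by
  have := Real.logb_le_logb_of_le (b := 2) one_lt_two two_pos hx
  rwa [Real.logb_self_eq_one one_lt_two] at this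

lemma g_mono {a b : ℝ} (ha : 1 ≤ a) (hab : a ≤ b) :
    Real.logb 2 (a + 1) / Real.logb 2 (Real.logb 2 (a + 2)) ≤
      Real.logb 2 (b + 1) / Real.logb 2 (Real.logb 2 (b + 2)) := by
  set ta := Real.logb 2 (a + 1) with hta
  set tb := Real.logb 2 (b + 1) with htb
  have hta1 : 1 ≤ ta := one_le_logb (by linarith)
  have htale : ta ≤ tb := Real.logb_le_logb_of_le one_lt_two (by linarith) (by linarith)
  have hpa : (2:ℝ) ^ ta + 1 = a + 2 := by
    rw [hta, Real.rpow_logb two_pos (by norm_num) (by linarith)]; ring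
  have hpb : (2:ℝ) ^ tb + 1 = b + 2 := by
    rw [htb, Real.rpow_logb two_pos (by norm_num) (by linarith)]; ring
  have hphia : phi ta = Real.logb 2 (Real.logb 2 (a + 2)) := by rw [phi, hpa]
  have hphib : phi tb = Real.logb 2 (Real.logb 2 (b + 2)) := by rw [phi, hpb]
  have hDa : 0 < phi ta := by
    rw [hphia]
    exact Real.logb_pos one_lt_two (by
      have := one_le_logb (x := a + 2) (by linarith)
      have h2 : Real.logb 2 2 < Real.logb 2 (a + 2) :=
        Real.logb_lt_logb one_lt_two two_pos (by linarith)
      rwa [Real.logb_self_eq_one one_lt_two] at h2)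
  have hDb : 0 < phi tb := by
    rw [hphib]
    exact Real.logb_pos one_lt_two (by
      have h2 : Real.logb 2 2 < Real.logb 2 (b + 2) :=
        Real.logb_lt_logb one_lt_two two_pos (by linarith)
      rwa [Real.logb_self_eq_one one_lt_two] at h2)
  have hstar := phi_star (by linarith : (0:ℝ) < ta) htale
  rw [← hphia, ← hphib, div_le_div_iff₀ hDa hDb]
  have htbpos : (0:ℝ) < tb := by linarith
  rw [div_mul_eq_mul_div, div_le_iff₀ htbpos] at hstar
  linarith

end SumFAux

/-- superadditivity bound used in Proposition 4: for positive
integers `m₁, …, m_j` with `m₁ + ⋯ + m_j ≤ m`, one has `∑ f (m i) ≤ f m`. -/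
theorem sum_f_le_f (j : ℕ) (m' : Fin j → ℕ) (hm' : ∀ i, 1 ≤ m' i)
    (m : ℕ) (hm : 1 ≤ m) (hsum : ∑ i, m' i ≤ m) :
    ∑ i, f (m' i) ≤ f m := by
  have hm1 : (1:ℝ) ≤ (m:ℝ) := by exact_mod_cast hm
  have hgm_nonneg : 0 ≤ Real.logb 2 ((m:ℝ) + 1) / Real.logb 2 (Real.logb 2 ((m:ℝ) + 2)) := by
    apply div_nonneg
    · exact Real.logb_nonneg one_lt_two (by linarith)
    · have h2 : Real.logb 2 2 < Real.logb 2 ((m:ℝ) + 2) :=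
        Real.logb_lt_logb one_lt_two two_pos (by linarith)
      rw [Real.logb_self_eq_one one_lt_two] at h2
      exact (Real.logb_pos one_lt_two h2).le
  have hstep : ∀ i, f (m' i) ≤ (m' i : ℝ) *
      (Real.logb 2 ((m:ℝ) + 1) / Real.logb 2 (Real.logb 2 ((m:ℝ) + 2))) := by
    intro i
    have h1 : (1:ℝ) ≤ (m' i : ℝ) := by exact_mod_cast hm' i
    have h2 : (m' i : ℝ) ≤ (m:ℝ) := by
      have : m' i ≤ m := le_trans
        (Finset.single_le_sum (f := fun i => m' i) (fun i _ => Nat.zero_le _)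
          (Finset.mem_univ i)) hsum
      exact_mod_cast this
    have hg := SumFAux.g_mono h1 h2
    calc f (m' i) = (m' i : ℝ) *
          (Real.logb 2 ((m' i : ℝ) + 1) / Real.logb 2 (Real.logb 2 ((m' i : ℝ) + 2))) := by
          rw [f, mul_div_assoc]
      _ ≤ _ := mul_le_mul_of_nonneg_left hg (by linarith)
  calc ∑ i, f (m' i)
      ≤ ∑ i, (m' i : ℝ) *
          (Real.logb 2 ((m:ℝ) + 1) / Real.logb 2 (Real.logb 2 ((m:ℝ) + 2))) :=
        Finset.sum_le_sum fun i _ => hstep i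
    _ = (∑ i, (m' i : ℝ)) *
          (Real.logb 2 ((m:ℝ) + 1) / Real.logb 2 (Real.logb 2 ((m:ℝ) + 2))) := by
        rw [Finset.sum_mul]
    _ ≤ (m:ℝ) * (Real.logb 2 ((m:ℝ) + 1) / Real.logb 2 (Real.logb 2 ((m:ℝ) + 2))) := by
        apply mul_le_mul_of_nonneg_right _ hgm_nonneg
        exact_mod_cast hsum
    _ = f m := by rw [f, mul_div_assoc]
end

section
/- Let (s_ℓ)_{ℓ ≥ 0} be a sequence of positive integers such that s₀ = 1 and, for every ℓ ≥ 1, setting w_ℓ = ⌈log₂(2·s_ℓ)⌉, one has s_{ℓ−1} = ⌈s_ℓ/w_ℓ⌉ and s_ℓ ≥ 2·s_{ℓ−1}. Then for every ℓ ≥ 1, w_ℓ ≥ ℓ + 1 and s_ℓ ≥ ℓ! (ℓ factorial). -/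
lemma ceil_div_lower (a b m : ℕ) (hb : 1 ≤ b) (hm : 1 ≤ m)
    (h : m = ⌈(a : ℝ) / (b : ℝ)⌉₊) : b * (m - 1) + 1 ≤ a := by
  have hlt : ((m - 1 : ℕ) : ℝ) < (a : ℝ) / (b : ℝ) := by
    rw [← Nat.lt_ceil, ← h]
    omega
  have hb' : (0 : ℝ) < (b : ℝ) := by exact_mod_cast hb
  have : ((m - 1 : ℕ) : ℝ) * (b : ℝ) < (a : ℝ) := by
    rw [← lt_div_iff₀ hb']; exact hlt
  have h2 : ((m - 1) * b : ℕ) < a := by exact_mod_cast this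
  rw [Nat.mul_comm]
  omega

lemma succ_le_factorial_of_three_le (n : ℕ) (hn : 3 ≤ n) : n + 1 ≤ Nat.factorial n := by
  induction n with
  | zero => omega
  | succ k ih =>
    rcases Nat.lt_or_ge k 3 with hk | hk
    · interval_cases k <;> simp [Nat.factorial] <;> omega
    · have := ih hk
      have hk1 : 1 ≤ Nat.factorial k := Nat.one_le_iff_ne_zero.mpr (Nat.factorial_ne_zero k)
      calc k + 1 + 1 ≤ Nat.factorial k + Nat.factorial k := by omega
        _ ≤ (k + 1) * Nat.factorial k := by nlinarith
        _ = Nat.factorial (k + 1) := rfl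

/-- recursion-depth bound from the proof of Proposition 1:
if `s 0 = 1` and for every `ℓ ≥ 1`, setting `w ℓ = ⌈log₂ (2 s ℓ)⌉`, we have
`s (ℓ-1) = ⌈s ℓ / w ℓ⌉` and `s ℓ ≥ 2 s (ℓ-1)`, then for every `ℓ ≥ 1`,
`w ℓ ≥ ℓ + 1` and `s ℓ ≥ ℓ!`. -/
theorem interval_size_lower_bound (s : ℕ → ℕ) (hpos : ∀ ℓ, 0 < s ℓ)
    (h0 : s 0 = 1)
    (hrec : ∀ ℓ, 1 ≤ ℓ →
      s (ℓ - 1) = ⌈(s ℓ : ℝ) / (⌈Real.logb 2 (2 * (s ℓ : ℝ))⌉₊ : ℝ)⌉₊ ∧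
        2 * s (ℓ - 1) ≤ s ℓ)
    (ℓ : ℕ) (hℓ : 1 ≤ ℓ) :
    ℓ + 1 ≤ ⌈Real.logb 2 (2 * (s ℓ : ℝ))⌉₊ ∧ Nat.factorial ℓ ≤ s ℓ := by
  -- First: s n ≥ 2^n for all n
  have hpow : ∀ n, 2 ^ n ≤ s n := by
    intro n
    induction n with
    | zero => simp [h0]
    | succ k ih =>
      have h := (hrec (k + 1) (by omega)).2
      simp only [Nat.add_sub_cancel] at h
      calc 2 ^ (k + 1) = 2 * 2 ^ k := by ring
        _ ≤ 2 * s k := by omega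
        _ ≤ s (k + 1) := h
  -- w bound for all n
  have hw : ∀ n, n + 1 ≤ ⌈Real.logb 2 (2 * (s n : ℝ))⌉₊ := by
    intro n
    have h2 : (2 : ℝ) ^ ((n + 1 : ℕ) : ℝ) ≤ 2 * (s n : ℝ) := by
      rw [Real.rpow_natCast]
      have : (2 : ℝ) ^ (n + 1) = 2 * (2 : ℝ) ^ n := by ring
      rw [this]
      have : ((2 ^ n : ℕ) : ℝ) ≤ (s n : ℝ) := by exact_mod_cast hpow n
      push_cast at this ⊢
      linarith
    have hy : (0 : ℝ) < 2 * (s n : ℝ) := by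
      have := hpos n
      positivity
    have hlog : ((n + 1 : ℕ) : ℝ) ≤ Real.logb 2 (2 * (s n : ℝ)) :=
      (Real.le_logb_iff_rpow_le (by norm_num) hy).mpr h2
    calc n + 1 = ⌈((n + 1 : ℕ) : ℝ)⌉₊ := (Nat.ceil_natCast _).symm
      _ ≤ ⌈Real.logb 2 (2 * (s n : ℝ))⌉₊ := Nat.ceil_mono hlog
  refine ⟨hw ℓ, ?_⟩
  -- factorial bound by induction
  clear hℓ
  induction ℓ with
  | zero => simp [h0, Nat.factorial]
  | succ k ih =>
    rcases Nat.lt_or_ge k 3 with hk | hk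
    · -- n ≤ 3 : use 2^n ≥ n!
      have := hpow (k+1)
      interval_cases k <;> simp_all [Nat.factorial] <;> omega
    · -- k ≥ 3
      have hw' := hw (k+1)
      have hceil := (hrec (k+1) (by omega)).1
      simp only [Nat.add_sub_cancel] at hceil
      have hkey : ⌈Real.logb 2 (2 * (s (k+1) : ℝ))⌉₊ * (s k - 1) + 1 ≤ s (k+1) :=
        ceil_div_lower (s (k+1)) _ (s k) (by omega) (hpos k) hceil
      have hfk := succ_le_factorial_of_three_le k hk
      have hsk := ih
      have h1 : (k + 2) * (s k - 1) + 1 ≤ s (k+1) := by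
        calc (k + 2) * (s k - 1) + 1
            ≤ ⌈Real.logb 2 (2 * (s (k+1) : ℝ))⌉₊ * (s k - 1) + 1 :=
              Nat.add_le_add_right (Nat.mul_le_mul_right _ hw') 1
          _ ≤ s (k+1) := hkey
      have : Nat.factorial (k+1) = (k + 1) * Nat.factorial k := rfl
      nlinarith [Nat.one_le_iff_ne_zero.mpr (Nat.factorial_ne_zero k),
        Nat.sub_add_cancel (hpos k)]
end

section
/- Let p be a prime, let α = (α₁, …, α_r) be a basis for a finite abelian p-group G with ord(α_i) = p^{n_i} and exponent p^m = p^{max n_i}, and let k be an integer with 0 < k ≤ m. Let β ∈ G and let x = DL(α, β). Set γ_i = α_i^{p^k}; then β^{p^k} ∈ ⟨γ₁, …, γ_r⟩, and letting u = DL(γ, β^{p^k}), the element β · α^{−u} satisfies (β · α^{−u})^{p^k} = 1. Further set q_i = p^{max(0, n_i − k)} and δ_i = α_i^{q_i}; then β · α^{−u} ∈ ⟨δ₁, …, δ_r⟩, and letting v = DL(δ, β · α^{−u}), one has x_i = q_i · v_i + u_i for every i (as an identity of integers). -/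
/-- the splitting of Section 2: let `α` be a basis for the
finite abelian `p`-group `G` with `orderOf (α i) = p ^ n i` and exponent
`p ^ m = p ^ max n i`, let `0 < k ≤ m`, let `β ∈ G` and `x = DL(α, β)`.
With `γ i = α i ^ p ^ k`, we have `β ^ p ^ k ∈ ⟨γ⟩`; and for
`u = DL(γ, β ^ p ^ k)`, the element `β ⬝ α^{-u}` satisfies
`(β ⬝ α^{-u}) ^ p ^ k = 1`.  With `q i = p ^ max 0 (n i - k)` and
`δ i = α i ^ q i`, we have `β ⬝ α^{-u} ∈ ⟨δ⟩`, and for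
`v = DL(δ, β ⬝ α^{-u})` one has `x i = q i * v i + u i` for every `i`. -/
theorem dl_splitting {p : ℕ} (hp : p.Prime) {G : Type*} [CommGroup G]
    [Fintype G] (hG : IsPGroup p G) {r : ℕ} (α : Fin r → G) (n : Fin r → ℕ)
    (hord : ∀ i, orderOf (α i) = p ^ n i)
    (hα : IsBasis α (⊤ : Subgroup G))
    (m : ℕ) (hm : IsGreatest (Set.range n) m)
    (hexp : Monoid.exponent G = p ^ m)
    (k : ℕ) (hk0 : 0 < k) (hkm : k ≤ m)
    (β : G) (x : Fin r → ℕ)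
    (hxlt : ∀ i, x i < orderOf (α i)) (hx : ∏ i, α i ^ x i = β) :
    β ^ p ^ k ∈ Subgroup.closure (Set.range fun i => α i ^ p ^ k) ∧
      ∀ u : Fin r → ℕ,
        (∀ i, u i < orderOf (α i ^ p ^ k)) →
        ∏ i, (α i ^ p ^ k) ^ u i = β ^ p ^ k →
        (β * (∏ i, α i ^ u i)⁻¹) ^ p ^ k = 1 ∧
          β * (∏ i, α i ^ u i)⁻¹ ∈
            Subgroup.closure (Set.range fun i => α i ^ p ^ (n i - k)) ∧
          ∀ v : Fin r → ℕ,
            (∀ i, v i < orderOf (α i ^ p ^ (n i - k))) →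
            ∏ i, (α i ^ p ^ (n i - k)) ^ v i = β * (∏ i, α i ^ u i)⁻¹ →
            ∀ i, x i = p ^ (n i - k) * v i + u i := by
  have hppos : 0 < p := hp.pos
  classical
  -- uniqueness of representations
  have huniq : ∀ (g : G) (y z : Fin r → ℕ), (∀ i, y i < p ^ n i) → (∀ i, z i < p ^ n i) →
      ∏ i, α i ^ y i = g → ∏ i, α i ^ z i = g → y = z := by
    intro g y z hy hz hyg hzg
    obtain ⟨w, -, hw⟩ := hα.2 g (Subgroup.mem_top g)
    have h1 := hw y ⟨fun i => (hord i).symm ▸ hy i, hyg⟩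
    have h2 := hw z ⟨fun i => (hord i).symm ▸ hz i, hzg⟩
    rw [h1, h2]
  -- order of γ i
  have hordγ : ∀ i, orderOf (α i ^ p ^ k) = p ^ (n i - k) := by
    intro i
    rw [orderOf_pow, hord i]
    rcases le_total k (n i) with h | h
    · rw [Nat.gcd_eq_right (pow_dvd_pow p h), Nat.pow_div h hppos]
    · rw [Nat.gcd_eq_left (pow_dvd_pow p h), Nat.div_self (pow_pos hppos _),
        Nat.sub_eq_zero_of_le h, pow_zero]
  -- order of δ i times p^(n i - k) is p^(n i)
  have hordδ : ∀ i, p ^ (n i - k) * orderOf (α i ^ p ^ (n i - k)) = p ^ n i := by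
    intro i
    rw [orderOf_pow, hord i, Nat.gcd_eq_right (pow_dvd_pow p (Nat.sub_le _ _)),
      Nat.pow_div (Nat.sub_le _ _) hppos, ← pow_add,
      Nat.add_sub_cancel' (Nat.sub_le _ _)]
  -- β^{p^k} in terms of α
  have hβpk : ∀ y : Fin r → ℕ, (∏ i, α i ^ y i = β) →
      β ^ p ^ k = ∏ i, (α i ^ p ^ k) ^ y i := by
    intro y hy
    rw [← hy, ← Finset.prod_pow]
    exact Finset.prod_congr rfl fun i _ => by rw [← pow_mul, ← pow_mul, mul_comm]
  constructor
  · rw [hβpk x hx]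
    exact Subgroup.prod_mem _ fun i _ =>
      Subgroup.pow_mem _ (Subgroup.subset_closure (Set.mem_range_self i)) _
  intro u hu hprodu
  -- key exponent identity: p^k * x i reduces mod p^(n i) to p^k * (x i % p^(n i - k))
  have hred : ∀ i, (α i ^ p ^ k) ^ (x i) = (α i ^ p ^ k) ^ (x i % p ^ (n i - k)) := by
    intro i
    rw [← pow_mod_orderOf, hordγ i]
  -- u is determined: u i = x i % p^(n i - k)
  have humod : ∀ i, u i = x i % p ^ (n i - k) := by
    have hb1 : ∀ i, p ^ k * u i < p ^ n i := by
      intro i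
      rcases le_total k (n i) with h | h
      · calc p ^ k * u i < p ^ k * p ^ (n i - k) :=
              mul_lt_mul_of_pos_left ((hordγ i) ▸ hu i) (pow_pos hppos _)
            _ = p ^ n i := by rw [← pow_add, Nat.add_sub_cancel' h]
      · have : u i = 0 := by
          have := (hordγ i) ▸ hu i
          simpa [Nat.sub_eq_zero_of_le h] using this
        simpa [this] using pow_pos hppos (n i)
    have hb2 : ∀ i, p ^ k * (x i % p ^ (n i - k)) < p ^ n i := by
      intro i
      rcases le_total k (n i) with h | h
      · calc p ^ k * (x i % p ^ (n i - k)) < p ^ k * p ^ (n i - k) :=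
              mul_lt_mul_of_pos_left (Nat.mod_lt _ (pow_pos hppos _))
                (pow_pos hppos _)
            _ = p ^ n i := by rw [← pow_add, Nat.add_sub_cancel' h]
      · simp only [Nat.sub_eq_zero_of_le h, pow_zero, Nat.mod_one, Nat.mul_zero]
        exact pow_pos hppos (n i)
    have he1 : ∏ i, α i ^ (p ^ k * u i) = β ^ p ^ k := by
      rw [← hprodu]; exact Finset.prod_congr rfl fun i _ => by rw [pow_mul]
    have he2 : ∏ i, α i ^ (p ^ k * (x i % p ^ (n i - k))) = β ^ p ^ k := by
      rw [hβpk x hx]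
      exact Finset.prod_congr rfl fun i _ => by
        rw [pow_mul, ← hred i]
    have := huniq (β ^ p ^ k) _ _ hb1 hb2 he1 he2
    intro i
    have hi := congrFun this i
    exact Nat.eq_of_mul_eq_mul_left (pow_pos hppos k) hi
  -- u i ≤ x i
  have hule : ∀ i, u i ≤ x i := fun i => (humod i) ▸ Nat.mod_le _ _
  -- the element β * α^{-u} as a product
  have hrest : β * (∏ i, α i ^ u i)⁻¹ = ∏ i, α i ^ (x i - u i) := by
    rw [eq_comm, eq_mul_inv_iff_mul_eq, ← Finset.prod_mul_distrib, ← hx]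
    exact Finset.prod_congr rfl fun i _ => by
      rw [← pow_add, Nat.sub_add_cancel (hule i)]
  refine ⟨?_, ?_, ?_⟩
  · -- (β * α^{-u})^{p^k} = 1
    rw [mul_pow, inv_pow, mul_inv_eq_one, ← hprodu, ← Finset.prod_pow]
    exact Finset.prod_congr rfl fun i _ => by rw [← pow_mul, ← pow_mul, mul_comm]
  · -- membership in closure of δ
    rw [hrest]
    refine Subgroup.prod_mem _ fun i _ => ?_
    have : x i - u i = p ^ (n i - k) * (x i / p ^ (n i - k)) := by
      have hdm := Nat.div_add_mod (x i) (p ^ (n i - k))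
      rw [humod i]
      omega
    rw [this, pow_mul]
    exact Subgroup.pow_mem _ (Subgroup.subset_closure (Set.mem_range_self i)) _
  · intro v hv hprodv
    have he1 : ∏ i, α i ^ (p ^ (n i - k) * v i + u i) = β := by
      have hsplit : ∏ i, α i ^ (p ^ (n i - k) * v i + u i)
          = (∏ i, (α i ^ p ^ (n i - k)) ^ v i) * ∏ i, α i ^ u i := by
        rw [← Finset.prod_mul_distrib]
        exact Finset.prod_congr rfl fun i _ => by rw [pow_add, pow_mul]
      rw [hsplit, hprodv, inv_mul_cancel_right]
    have hb1 : ∀ i, p ^ (n i - k) * v i + u i < p ^ n i := by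
      intro i
      have h1 : u i < p ^ (n i - k) := (hordγ i) ▸ hu i
      have h2 : v i + 1 ≤ orderOf (α i ^ p ^ (n i - k)) := hv i
      calc p ^ (n i - k) * v i + u i < p ^ (n i - k) * v i + p ^ (n i - k) := by omega
        _ = p ^ (n i - k) * (v i + 1) := by ring
        _ ≤ p ^ (n i - k) * orderOf (α i ^ p ^ (n i - k)) :=
            Nat.mul_le_mul_left _ h2
        _ = p ^ n i := hordδ i
    have hb2 : ∀ i, x i < p ^ n i := fun i => (hord i) ▸ hxlt i
    have := huniq β _ _ hb2 hb1 hx he1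
    intro i
    exact congrFun this i
end
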